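/- arXiv:1904.02604 — 6 statements merged into one kernel-verified Lean document; each statement's English description precedes it below -/
import Mathlib

section
/- There exists a constant c ∈ (0,1) such that for every bounded subset S of the 2×2 real matrices containing the identity matrix, one has E(S²) ≥ Λ(S²) ≥ c² · E(S)², where S² = { gh : g, h ∈ S }. -/
open scoped Pointwise
noncomputable section

/-- Operator norm of a `2×2` real matrix induced by the Euclidean norm on `ℝ²`. -/
def opNorm (A : Matrix (Fin 2) (Fin 2) ℝ) : ℝ :=
  ‖LinearMap.toContinuousLinearMap (Matrix.toEuclideanLin A)‖

/-- The norm `‖Q‖ = sup_{g ∈ Q} ‖g‖` of a set of matrices. -/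
def setNorm (Q : Set (Matrix (Fin 2) (Fin 2) ℝ)) : ℝ :=
  sSup (opNorm '' Q)

/-- `lam` is a (complex) eigenvalue of the real matrix `A`. -/
def IsEigenvalue (A : Matrix (Fin 2) (Fin 2) ℝ) (lam : ℂ) : Prop :=
  ∃ v : Fin 2 → ℂ, v ≠ 0 ∧ (A.map (Complex.ofReal)).mulVec v = lam • v

/-- `Λ(Q)`: the maximal modulus of an eigenvalue of an element of `Q`. -/
def matLambda (Q : Set (Matrix (Fin 2) (Fin 2) ℝ)) : ℝ :=
  sSup {x : ℝ | ∃ q ∈ Q, ∃ lam : ℂ, IsEigenvalue q lam ∧ x = ‖lam‖}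

/-- `E(Q)`: the minimal norm of `Q` over all conjugations by elements of `GL(2,ℝ)`. -/
def minNorm (Q : Set (Matrix (Fin 2) (Fin 2) ℝ)) : ℝ :=
  ⨅ g : GL (Fin 2) ℝ, setNorm ((fun s => (g : Matrix (Fin 2) (Fin 2) ℝ) * s * ((g⁻¹ : GL (Fin 2) ℝ) : Matrix (Fin 2) (Fin 2) ℝ)) '' Q)

/-- The canonical embedding of `SL(2,ℤ)` into the `2×2` real matrices. -/
def toReal (g : Matrix.SpecialLinearGroup (Fin 2) ℤ) : Matrix (Fin 2) (Fin 2) ℝ :=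
  (g : Matrix (Fin 2) (Fin 2) ℤ).map (Int.cast : ℤ → ℝ)

/-- The cross product (determinant) of two vectors of `ℝ²`. -/
def cross (u v : Fin 2 → ℝ) : ℝ := u 0 * v 1 - u 1 * v 0

/-- The Euclidean norm on `ℝ²`. -/
def enorm2 (u : Fin 2 → ℝ) : ℝ := Real.sqrt (u 0 ^ 2 + u 1 ^ 2)

/-- Fubini–Study distance between the lines spanned by `u` and `v`. -/
def pdist (u v : Fin 2 → ℝ) : ℝ := |cross u v| / (enorm2 u * enorm2 v)

set_option maxHeartbeats 1600000

lemma opNorm_nonneg (A : Matrix (Fin 2) (Fin 2) ℝ) : 0 ≤ opNorm A := norm_nonneg _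

private lemma euc_norm_eq (w : Fin 2 → ℝ) :
    ‖(WithLp.equiv 2 (Fin 2 → ℝ)).symm w‖ = Real.sqrt ((w 0)^2 + (w 1)^2) := by
  rw [EuclideanSpace.norm_eq]
  congr 1
  rw [Fin.sum_univ_two]
  simp [sq_abs]

lemma norm_mulVec_sq (A : Matrix (Fin 2) (Fin 2) ℝ) (v : Fin 2 → ℝ) :
    (A.mulVec v 0)^2 + (A.mulVec v 1)^2 ≤ opNorm A ^ 2 * ((v 0)^2 + (v 1)^2) := by
  have h := (LinearMap.toContinuousLinearMap (Matrix.toEuclideanLin A)).le_opNorm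
      ((WithLp.equiv 2 (Fin 2 → ℝ)).symm v)
  have hl : (LinearMap.toContinuousLinearMap (Matrix.toEuclideanLin A))
      ((WithLp.equiv 2 (Fin 2 → ℝ)).symm v) = (WithLp.equiv 2 (Fin 2 → ℝ)).symm (A.mulVec v) := rfl
  rw [hl, euc_norm_eq, euc_norm_eq] at h
  have h1 : (0:ℝ) ≤ (A.mulVec v 0)^2 + (A.mulVec v 1)^2 := by positivity
  have h2 : (0:ℝ) ≤ (v 0)^2 + (v 1)^2 := by positivity
  calc (A.mulVec v 0)^2 + (A.mulVec v 1)^2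
      = (Real.sqrt ((A.mulVec v 0)^2 + (A.mulVec v 1)^2))^2 := (Real.sq_sqrt h1).symm
    _ ≤ (opNorm A * Real.sqrt ((v 0)^2 + (v 1)^2))^2 := by
        apply pow_le_pow_left₀ (Real.sqrt_nonneg _) h
    _ = opNorm A ^2 * ((v 0)^2 + (v 1)^2) := by rw [mul_pow, Real.sq_sqrt h2]

lemma opNorm_le_bound {A : Matrix (Fin 2) (Fin 2) ℝ} {C : ℝ} (hC : 0 ≤ C)
    (h : ∀ v : Fin 2 → ℝ, (A.mulVec v 0)^2 + (A.mulVec v 1)^2 ≤ C^2 * ((v 0)^2 + (v 1)^2)) :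
    opNorm A ≤ C := by
  apply ContinuousLinearMap.opNorm_le_bound _ hC
  intro x
  have hl : (LinearMap.toContinuousLinearMap (Matrix.toEuclideanLin A)) x
      = (WithLp.equiv 2 (Fin 2 → ℝ)).symm (A.mulVec ((WithLp.equiv 2 (Fin 2 → ℝ)) x)) := rfl
  rw [hl]
  set v := (WithLp.equiv 2 (Fin 2 → ℝ)) x with hv
  have hx : ‖x‖ = Real.sqrt ((v 0)^2 + (v 1)^2) := euc_norm_eq v
  rw [euc_norm_eq, hx]
  rw [show C * Real.sqrt ((v 0)^2 + (v 1)^2) = Real.sqrt (C^2 * ((v 0)^2 + (v 1)^2)) by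
    rw [Real.sqrt_mul (by positivity), Real.sqrt_sq hC]]
  exact Real.sqrt_le_sqrt (h v)

lemma mulVec_two {R : Type*} [CommRing R] (A : Matrix (Fin 2) (Fin 2) R) (v : Fin 2 → R) (i : Fin 2) :
    A.mulVec v i = A i 0 * v 0 + A i 1 * v 1 := by
  simp [Matrix.mulVec, dotProduct, Fin.sum_univ_two]

lemma abs_entry_le_opNorm (A : Matrix (Fin 2) (Fin 2) ℝ) (i j : Fin 2) :
    |A i j| ≤ opNorm A := by
  have h := norm_mulVec_sq A (fun k => if k = j then 1 else 0)
  have hv : (fun k : Fin 2 => if k = j then (1:ℝ) else 0) 0 ^2 + (fun k : Fin 2 => if k = j then (1:ℝ) else 0) 1 ^2 = 1 := by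
    fin_cases j <;> norm_num
  rw [hv, mul_one] at h
  have he : ∀ i : Fin 2, A.mulVec (fun k => if k = j then (1:ℝ) else 0) i = A i j := by
    intro i; rw [mulVec_two]; fin_cases j <;> norm_num
  rw [he 0, he 1] at h
  have h2 : (A i j)^2 ≤ opNorm A ^2 := by
    have hi : i = 0 ∨ i = 1 := by omega
    rcases hi with rfl | rfl <;> nlinarith [sq_nonneg (A 0 j), sq_nonneg (A 1 j)]
  nlinarith [abs_nonneg (A i j), sq_abs (A i j), opNorm_nonneg A]

lemma opNorm_le_sum_abs (A : Matrix (Fin 2) (Fin 2) ℝ) :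
    opNorm A ≤ |A 0 0| + |A 0 1| + |A 1 0| + |A 1 1| := by
  apply opNorm_le_bound (by positivity)
  intro v
  rw [mulVec_two, mulVec_two]
  nlinarith [sq_nonneg (A 0 0 * v 1 - A 0 1 * v 0), sq_nonneg (A 1 0 * v 1 - A 1 1 * v 0),
    sq_abs (A 0 0), sq_abs (A 0 1), sq_abs (A 1 0), sq_abs (A 1 1),
    mul_nonneg (abs_nonneg (A 0 0)) (abs_nonneg (A 0 1)),
    mul_nonneg (abs_nonneg (A 0 0)) (abs_nonneg (A 1 0)),
    mul_nonneg (abs_nonneg (A 0 0)) (abs_nonneg (A 1 1)),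
    mul_nonneg (abs_nonneg (A 0 1)) (abs_nonneg (A 1 0)),
    mul_nonneg (abs_nonneg (A 0 1)) (abs_nonneg (A 1 1)),
    mul_nonneg (abs_nonneg (A 1 0)) (abs_nonneg (A 1 1)),
    sq_nonneg (v 0), sq_nonneg (v 1),
    mul_nonneg (mul_nonneg (abs_nonneg (A 0 0)) (abs_nonneg (A 0 1))) (sq_nonneg (v 0)),
    mul_nonneg (mul_nonneg (abs_nonneg (A 0 0)) (abs_nonneg (A 0 1))) (sq_nonneg (v 1)),
    mul_nonneg (mul_nonneg (abs_nonneg (A 1 0)) (abs_nonneg (A 1 1))) (sq_nonneg (v 0)),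
    mul_nonneg (mul_nonneg (abs_nonneg (A 1 0)) (abs_nonneg (A 1 1))) (sq_nonneg (v 1)),
    mul_nonneg (mul_nonneg (abs_nonneg (A 0 0)) (abs_nonneg (A 1 0))) (sq_nonneg (v 0)),
    mul_nonneg (mul_nonneg (abs_nonneg (A 0 1)) (abs_nonneg (A 1 1))) (sq_nonneg (v 1))]

lemma opNorm_mul_le (A B : Matrix (Fin 2) (Fin 2) ℝ) :
    opNorm (A * B) ≤ opNorm A * opNorm B := by
  apply opNorm_le_bound (mul_nonneg (opNorm_nonneg A) (opNorm_nonneg B))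
  intro v
  rw [← Matrix.mulVec_mulVec]
  calc (A.mulVec (B.mulVec v) 0)^2 + (A.mulVec (B.mulVec v) 1)^2
      ≤ opNorm A ^2 * ((B.mulVec v 0)^2 + (B.mulVec v 1)^2) := norm_mulVec_sq A _
    _ ≤ opNorm A ^2 * (opNorm B ^2 * ((v 0)^2 + (v 1)^2)) := by
        exact mul_le_mul_of_nonneg_left (norm_mulVec_sq B v) (by positivity)
    _ = (opNorm A * opNorm B)^2 * ((v 0)^2 + (v 1)^2) := by ring

lemma opNorm_one : opNorm (1 : Matrix (Fin 2) (Fin 2) ℝ) = 1 := by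
  refine le_antisymm (opNorm_le_bound zero_le_one ?_) ?_
  · intro v; rw [Matrix.one_mulVec]; norm_num
  · have := abs_entry_le_opNorm (1 : Matrix (Fin 2) (Fin 2) ℝ) 0 0
    simpa using this

lemma eigen_component {A : Matrix (Fin 2) (Fin 2) ℝ} {lam : ℂ} {v : Fin 2 → ℂ}
    (hv : (A.map (Complex.ofReal)).mulVec v = lam • v) (i : Fin 2) :
    (A i 0 : ℂ) * v 0 + (A i 1 : ℂ) * v 1 = lam * v i := by
  have := congrFun hv i
  rwa [mulVec_two, Matrix.map_apply, Matrix.map_apply, Pi.smul_apply, smul_eq_mul] at this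

lemma isEigenvalue_of_root (A : Matrix (Fin 2) (Fin 2) ℝ) (lam : ℂ)
    (h : lam^2 - ((A 0 0 : ℂ) + (A 1 1 : ℂ))*lam + ((A 0 0 : ℂ)*(A 1 1 : ℂ) - (A 0 1 : ℂ)*(A 1 0 : ℂ)) = 0) :
    IsEigenvalue A lam := by
  set a := (A 0 0 : ℂ) with ha; set b := (A 0 1 : ℂ) with hbdef
  set c := (A 1 0 : ℂ) with hcdef; set d := (A 1 1 : ℂ) with hd
  have hmk : ∀ v : Fin 2 → ℂ, (a * v 0 + b * v 1 = lam * v 0) → (c * v 0 + d * v 1 = lam * v 1) →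
      (A.map Complex.ofReal).mulVec v = lam • v := by
    intro v h0 h1
    funext i
    have hi : i = 0 ∨ i = 1 := by omega
    rcases hi with rfl | rfl <;>
      simpa [mulVec_two, Matrix.map_apply] using (by assumption : _)
  by_cases hb : b ≠ 0
  · refine ⟨![b, lam - a], ?_, hmk _ ?_ ?_⟩
    · intro hz; exact hb (by simpa using congrFun hz 0)
    · simp only [Matrix.cons_val_zero, Matrix.cons_val_one, Matrix.head_cons]; ring
    · simp only [Matrix.cons_val_zero, Matrix.cons_val_one, Matrix.head_cons]
      linear_combination -h
  · push_neg at hb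
    by_cases hc : c ≠ 0
    · refine ⟨![lam - d, c], ?_, hmk _ ?_ ?_⟩
      · intro hz; exact hc (by simpa using congrFun hz 1)
      · simp only [Matrix.cons_val_zero, Matrix.cons_val_one, Matrix.head_cons]
        linear_combination -h
      · simp only [Matrix.cons_val_zero, Matrix.cons_val_one, Matrix.head_cons]; ring
    · push_neg at hc
      have hfact : (lam - a) * (lam - d) = 0 := by
        rw [hb, hc] at h; linear_combination h
      rcases mul_eq_zero.mp hfact with h0 | h0
      · refine ⟨![1, 0], ?_, hmk _ ?_ ?_⟩
        · intro hz; simpa using congrFun hz 0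
        · simp only [Matrix.cons_val_zero, Matrix.cons_val_one, Matrix.head_cons]
          linear_combination -h0
        · simp only [Matrix.cons_val_zero, Matrix.cons_val_one, Matrix.head_cons]
          rw [hc]; ring
      · refine ⟨![0, 1], ?_, hmk _ ?_ ?_⟩
        · intro hz; simpa using congrFun hz 1
        · simp only [Matrix.cons_val_zero, Matrix.cons_val_one, Matrix.head_cons]
          rw [hb]; ring
        · simp only [Matrix.cons_val_zero, Matrix.cons_val_one, Matrix.head_cons]
          linear_combination -h0

lemma exists_eigenvalues (A : Matrix (Fin 2) (Fin 2) ℝ) :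
    ∃ l1 l2 : ℂ, IsEigenvalue A l1 ∧ IsEigenvalue A l2 ∧
      l1 + l2 = (A 0 0 : ℂ) + (A 1 1 : ℂ) ∧
      l1 * l2 = (A 0 0 : ℂ)*(A 1 1 : ℂ) - (A 0 1 : ℂ)*(A 1 0 : ℂ) := by
  set T := (A 0 0 : ℂ) + (A 1 1 : ℂ) with hT
  set D := (A 0 0 : ℂ)*(A 1 1 : ℂ) - (A 0 1 : ℂ)*(A 1 0 : ℂ) with hD
  obtain ⟨z, hz⟩ := IsAlgClosed.exists_pow_nat_eq (T^2 - 4*D) (n := 2) (by norm_num)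
  refine ⟨(T+z)/2, (T-z)/2, isEigenvalue_of_root A _ (by linear_combination hz/4),
    isEigenvalue_of_root A _ (by linear_combination hz/4), by ring, by linear_combination -hz/4⟩

lemma isEigenvalue_sq {A : Matrix (Fin 2) (Fin 2) ℝ} {lam : ℂ}
    (h : IsEigenvalue A lam) : IsEigenvalue (A * A) (lam^2) := by
  obtain ⟨v, hv, he⟩ := h
  refine ⟨v, hv, ?_⟩
  have hmap : (A * A).map Complex.ofReal = A.map Complex.ofReal * A.map Complex.ofReal := by
    ext i j
    simp [Matrix.mul_apply, Matrix.map_apply, Fin.sum_univ_two]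
  rw [hmap, ← Matrix.mulVec_mulVec, he, Matrix.mulVec_smul, he, smul_smul, pow_two]

lemma abs_eigen_le_two_opNorm {A : Matrix (Fin 2) (Fin 2) ℝ} {lam : ℂ}
    (h : IsEigenvalue A lam) : ‖lam‖ ≤ 2 * opNorm A := by
  obtain ⟨v, hv, he⟩ := h
  have key : ∀ i : Fin 2, (∀ k, ‖v k‖ ≤ ‖v i‖) → v i ≠ 0 →
      ‖lam‖ ≤ 2 * opNorm A := by
    intro i hmax hne
    have hc := eigen_component he i
    have habs : ‖lam‖ * ‖v i‖ ≤
        (|A i 0| + |A i 1|) * ‖v i‖ := by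
      rw [← norm_mul, ← hc]
      calc ‖(A i 0 : ℂ) * v 0 + (A i 1 : ℂ) * v 1‖
          ≤ ‖(A i 0 : ℂ) * v 0‖ + ‖(A i 1 : ℂ) * v 1‖ :=
            norm_add_le _ _
        _ = |A i 0| * ‖v 0‖ + |A i 1| * ‖v 1‖ := by
            simp [norm_mul, Complex.norm_real]
        _ ≤ (|A i 0| + |A i 1|) * ‖v i‖ := by
            nlinarith [hmax 0, hmax 1, abs_nonneg (A i 0), abs_nonneg (A i 1),
              norm_nonneg (v 0), norm_nonneg (v 1)]
    have hpos : 0 < ‖v i‖ := norm_pos_iff.mpr hne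
    have h2 := le_of_mul_le_mul_right habs hpos
    calc ‖lam‖ ≤ |A i 0| + |A i 1| := h2
      _ ≤ 2 * opNorm A := by linarith [abs_entry_le_opNorm A i 0, abs_entry_le_opNorm A i 1]
  rcases le_total (‖v 0‖) (‖v 1‖) with hle | hle
  · refine key 1 (fun k => by rcases (by omega : k = 0 ∨ k = 1) with rfl | rfl; exact hle; exact le_refl _) ?_
    intro hz
    apply hv
    funext k
    have h0 : v 0 = 0 := by
      have h1 : ‖v 0‖ ≤ 0 := by rw [hz] at hle; simpa using hle
      exact norm_eq_zero.mp (le_antisymm h1 (norm_nonneg _))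
    rcases (by omega : k = 0 ∨ k = 1) with rfl | rfl
    · exact h0
    · exact hz
  · refine key 0 (fun k => by rcases (by omega : k = 0 ∨ k = 1) with rfl | rfl; exact le_refl _; exact hle) ?_
    intro hz
    apply hv
    funext k
    have h0 : v 1 = 0 := by
      have h1 : ‖v 1‖ ≤ 0 := by rw [hz] at hle; simpa using hle
      exact norm_eq_zero.mp (le_antisymm h1 (norm_nonneg _))
    rcases (by omega : k = 0 ∨ k = 1) with rfl | rfl
    · exact hz
    · exact h0

lemma abs_eigen_le_opNorm {A : Matrix (Fin 2) (Fin 2) ℝ} {lam : ℂ}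
    (h : IsEigenvalue A lam) : ‖lam‖ ≤ opNorm A := by
  obtain ⟨v, hv, he⟩ := h
  set p : Fin 2 → ℝ := fun i => (v i).re with hp
  set q : Fin 2 → ℝ := fun i => (v i).im with hq
  have hre : ∀ i, A.mulVec p i = (lam * v i).re := by
    intro i
    have hc := eigen_component he i
    rw [mulVec_two, ← hc]
    simp [hp, Complex.add_re, Complex.mul_re]
  have him : ∀ i, A.mulVec q i = (lam * v i).im := by
    intro i
    have hc := eigen_component he i
    rw [mulVec_two, ← hc]
    simp [hq, Complex.add_im, Complex.mul_im]
  have h1 := norm_mulVec_sq A p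
  have h2 := norm_mulVec_sq A q
  rw [hre 0, hre 1] at h1
  rw [him 0, him 1] at h2
  have habs : ∀ z : ℂ, (‖z‖)^2 = z.re^2 + z.im^2 := by
    intro z
    rw [Complex.sq_norm, Complex.normSq_apply]; ring
  have hsum : (‖lam‖)^2 * ((‖v 0‖)^2 + (‖v 1‖)^2)
      ≤ opNorm A ^2 * ((‖v 0‖)^2 + (‖v 1‖)^2) := by
    have e0 : (‖lam * v 0‖)^2 + (‖lam * v 1‖)^2
        = (‖lam‖)^2 * ((‖v 0‖)^2 + (‖v 1‖)^2) := by
      rw [norm_mul, norm_mul]; ring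
    have e1 : (‖v 0‖)^2 + (‖v 1‖)^2 = (p 0^2 + p 1^2) + (q 0^2 + q 1^2) := by
      rw [habs, habs]; ring
    calc (‖lam‖)^2 * ((‖v 0‖)^2 + (‖v 1‖)^2)
        = ((lam * v 0).re^2 + (lam * v 0).im^2) + ((lam * v 1).re^2 + (lam * v 1).im^2) := by
          rw [← e0, habs (lam * v 0), habs (lam * v 1)]
      _ ≤ opNorm A ^2 * ((p 0^2 + p 1^2) + (q 0^2 + q 1^2)) := by linarith
      _ = opNorm A ^2 * ((‖v 0‖)^2 + (‖v 1‖)^2) := by rw [e1]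
  have hvpos : 0 < (‖v 0‖)^2 + (‖v 1‖)^2 := by
    rcases Function.ne_iff.mp hv with ⟨k, hk⟩
    have hk2 : 0 < ‖v k‖ := norm_pos_iff.mpr hk
    rcases (by omega : k = 0 ∨ k = 1) with rfl | rfl
    · nlinarith [sq_nonneg (‖v 1‖)]
    · nlinarith [sq_nonneg (‖v 0‖)]
  have hsq : (‖lam‖)^2 ≤ opNorm A ^2 :=
    le_of_mul_le_mul_right hsum hvpos
  have := Real.sqrt_le_sqrt hsq
  rwa [Real.sqrt_sq (norm_nonneg _), Real.sqrt_sq (opNorm_nonneg A)] at this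

lemma vec2_eq {R : Type*} {v w : Fin 2 → R} (h0 : v 0 = w 0) (h1 : v 1 = w 1) : v = w := by
  funext i
  rcases (by omega : i = 0 ∨ i = 1) with rfl | rfl <;> assumption

lemma rot_core (s : Matrix (Fin 2) (Fin 2) ℝ) (u0 u1 α β a : ℝ)
    (hu : u0^2 + u1^2 = 1) (hαβ : α^2 + β^2 = 1)
    (hs0 : s.mulVec ![α, β] 0 = a * u0) (hs1 : s.mulVec ![α, β] 1 = a * u1) :
    ∃ (R Rinv : Matrix (Fin 2) (Fin 2) ℝ) (α' β' : ℝ),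
      R * Rinv = 1 ∧ Rinv * R = 1 ∧ opNorm R ≤ 1 ∧ opNorm Rinv ≤ 1 ∧
      α'^2 + β'^2 = 1 ∧ (R*s*Rinv).mulVec ![α', β'] = ![a, 0] := by
  refine ⟨!![u0, u1; -u1, u0], !![u0, -u1; u1, u0], u0*α + u1*β, -u1*α + u0*β,
    ?_, ?_, ?_, ?_, by nlinarith, ?_⟩
  · ext i j
    fin_cases i <;> fin_cases j <;>
      simp [Matrix.mul_apply, Fin.sum_univ_two] <;> linarith [hu]
  · ext i j
    fin_cases i <;> fin_cases j <;>
      simp [Matrix.mul_apply, Fin.sum_univ_two] <;> linarith [hu]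
  · apply opNorm_le_bound zero_le_one
    intro x
    rw [mulVec_two, mulVec_two]
    simp
    nlinarith [sq_nonneg (x 0), sq_nonneg (x 1)]
  · apply opNorm_le_bound zero_le_one
    intro x
    rw [mulVec_two, mulVec_two]
    simp
    nlinarith [sq_nonneg (x 0), sq_nonneg (x 1)]
  · have h1 : Matrix.mulVec !![u0, -u1; u1, u0] ![u0*α + u1*β, -u1*α + u0*β] = ![α, β] := by
      apply vec2_eq
      · rw [mulVec_two]; simp; linear_combination α * hu
      · rw [mulVec_two]; simp; linear_combination β * hu
    have h2 : s.mulVec ![α, β] = ![a*u0, a*u1] := by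
      apply vec2_eq
      · rw [hs0]; simp
      · rw [hs1]; simp
    have h3 : Matrix.mulVec !![u0, u1; -u1, u0] ![a*u0, a*u1] = ![a, 0] := by
      apply vec2_eq
      · rw [mulVec_two]; simp; linear_combination a * hu
      · rw [mulVec_two]; simp; ring
    rw [← Matrix.mulVec_mulVec, ← Matrix.mulVec_mulVec, h1, h2, h3]

lemma exists_rotation (s : Matrix (Fin 2) (Fin 2) ℝ) (N : ℝ) (hN : 0 < N)
    (hs : 0.9*N ≤ opNorm s) :
    ∃ (R Rinv : Matrix (Fin 2) (Fin 2) ℝ) (α' β' a : ℝ),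
      R * Rinv = 1 ∧ Rinv * R = 1 ∧ opNorm R ≤ 1 ∧ opNorm Rinv ≤ 1 ∧
      α'^2 + β'^2 = 1 ∧ 0.8*N < a ∧
      (R*s*Rinv).mulVec ![α', β'] = ![a, 0] := by
  have hbig : ∃ v : Fin 2 → ℝ, (0.85*N)^2 * ((v 0)^2 + (v 1)^2) < (s.mulVec v 0)^2 + (s.mulVec v 1)^2 := by
    by_contra hcon
    push_neg at hcon
    have := opNorm_le_bound (by positivity : (0:ℝ) ≤ 0.85*N) (fun v => hcon v)
    linarith
  obtain ⟨v, hv⟩ := hbig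
  have hn2 : 0 < (v 0)^2 + (v 1)^2 := by
    rcases lt_or_ge 0 ((v 0)^2 + (v 1)^2) with h | h
    · exact h
    · exfalso
      have h0 : v 0 = 0 := by nlinarith [sq_nonneg (v 0), sq_nonneg (v 1)]
      have h1 : v 1 = 0 := by nlinarith [sq_nonneg (v 0), sq_nonneg (v 1)]
      have hw0 : s.mulVec v 0 = 0 := by rw [mulVec_two, h0, h1]; ring
      have hw1 : s.mulVec v 1 = 0 := by rw [mulVec_two, h0, h1]; ring
      rw [hw0, hw1] at hv
      nlinarith [sq_nonneg (v 0), sq_nonneg (v 1)]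
  obtain ⟨r, hr⟩ : ∃ r, r = Real.sqrt ((v 0)^2 + (v 1)^2) := ⟨_, rfl⟩
  have hrpos : 0 < r := hr ▸ Real.sqrt_pos.mpr hn2
  have hr2 : r^2 = (v 0)^2 + (v 1)^2 := hr ▸ Real.sq_sqrt (le_of_lt hn2)
  obtain ⟨w, hwdef⟩ : ∃ w, w = s.mulVec v := ⟨_, rfl⟩
  obtain ⟨aa, haa⟩ : ∃ aa, aa = Real.sqrt ((w 0)^2 + (w 1)^2) := ⟨_, rfl⟩
  have haa2 : aa^2 = (w 0)^2 + (w 1)^2 := haa ▸ Real.sq_sqrt (by positivity)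
  have hvw : (0.85*N)^2 * ((v 0)^2 + (v 1)^2) < (w 0)^2 + (w 1)^2 := by rw [hwdef]; exact hv
  have haapos : 0.85*N*r < aa := by
    nlinarith [haa ▸ Real.sqrt_nonneg ((w 0)^2 + (w 1)^2), hr2, haa2]
  have haapos' : 0 < aa := by nlinarith
  have hu : (w 0/aa)^2 + (w 1/aa)^2 = 1 := by
    field_simp
    try ring
    linarith [haa2]
  have hαβ : (v 0/r)^2 + (v 1/r)^2 = 1 := by
    field_simp
    try ring
    linarith [hr2]
  have hw0 : w 0 = s 0 0 * v 0 + s 0 1 * v 1 := by rw [hwdef, mulVec_two]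
  have hw1 : w 1 = s 1 0 * v 0 + s 1 1 * v 1 := by rw [hwdef, mulVec_two]
  have hs0 : s.mulVec ![v 0/r, v 1/r] 0 = (aa/r) * (w 0/aa) := by
    rw [mulVec_two]
    simp only [Matrix.cons_val_zero, Matrix.cons_val_one, Matrix.head_cons]
    rw [hw0]
    field_simp
    try ring
  have hs1 : s.mulVec ![v 0/r, v 1/r] 1 = (aa/r) * (w 1/aa) := by
    rw [mulVec_two]
    simp only [Matrix.cons_val_zero, Matrix.cons_val_one, Matrix.head_cons]
    rw [hw1]
    field_simp
    try ring
  obtain ⟨R, Rinv, α', β', h1, h2, h3, h4, h5, h6⟩ :=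
    rot_core s (w 0/aa) (w 1/aa) (v 0/r) (v 1/r) (aa/r) hu hαβ hs0 hs1
  refine ⟨R, Rinv, α', β', aa/r, h1, h2, h3, h4, h5, ?_, h6⟩
  rw [lt_div_iff₀ hrpos]
  nlinarith

lemma amul {x y a b : ℝ} (hx : |x| ≤ a) (hy : |y| ≤ b) : |x*y| ≤ a*b := by
  rw [abs_mul]
  exact mul_le_mul hx hy (abs_nonneg y) (le_trans (abs_nonneg x) hx)

lemma abs_add4 (w x y z : ℝ) : |w + x + y + z| ≤ |w| + |x| + |y| + |z| := by
  calc |w + x + y + z| ≤ |w + x + y| + |z| := abs_add_le _ _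
    _ ≤ |w + x| + |y| + |z| := by linarith [abs_add_le (w+x) y]
    _ ≤ |w| + |x| + |y| + |z| := by linarith [abs_add_le w x]

lemma abs_add3 (w x y : ℝ) : |w + x + y| ≤ |w| + |x| + |y| := by
  calc |w + x + y| ≤ |w + x| + |y| := abs_add_le _ _
    _ ≤ |w| + |x| + |y| := by linarith [abs_add_le w x]

lemma core_bound (N : ℝ) (hN : 1 ≤ N)
    (s t : Matrix (Fin 2) (Fin 2) ℝ) (α β a : ℝ)
    (hαβ : α^2 + β^2 = 1) (ha : 0.8*N < a)
    (E0 : s 0 0 * α + s 0 1 * β = a)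
    (E1 : s 1 0 * α + s 1 1 * β = 0)
    (hs_tr : |s 0 0 + s 1 1| ≤ N/5000)
    (hs_det : |s 0 0 * s 1 1 - s 0 1 * s 1 0| ≤ N^2/100000000)
    (ht_bound : ∀ i j, |t i j| ≤ 2*N)
    (ht_tr : |t 0 0 + t 1 1| ≤ N/5000)
    (ht_det : |t 0 0 * t 1 1 - t 0 1 * t 1 0| ≤ N^2/100000000)
    (hst_tr : |s 0 0 * t 0 0 + s 0 1 * t 1 0 + s 1 0 * t 0 1 + s 1 1 * t 1 1| ≤ N^2/50000000) :
    |t 1 0| ≤ N/1500 ∧ |t 0 0| ≤ N/20 ∧ |t 1 1| ≤ N/20 := by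
  have hN0 : 0 < N := by linarith
  have hαle : |α| ≤ 1 := by nlinarith [sq_nonneg α, sq_nonneg β, abs_nonneg α, sq_abs α]
  have hβle : |β| ≤ 1 := by nlinarith [sq_nonneg α, sq_nonneg β, abs_nonneg β, sq_abs β]
  set γ := s 1 1 * α - s 1 0 * β with hγdef
  have hγ : a * γ = s 0 0 * s 1 1 - s 0 1 * s 1 0 := by
    linear_combination (-(s 1 1 * α - s 1 0 * β)) * E0 + (s 0 1 * α - s 0 0 * β) * E1 +
      (s 0 0 * s 1 1 - s 0 1 * s 1 0) * hαβ
  have hγle : |γ| ≤ N/50000000 := by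
    have h1 : |a * γ| ≤ N^2/100000000 := by rw [hγ]; exact hs_det
    rw [abs_mul, abs_of_pos (by linarith : (0:ℝ) < a)] at h1
    nlinarith [abs_nonneg γ]
  have hs10 : s 1 0 = -γ * β := by
    rw [hγdef]; linear_combination α * E1 - s 1 0 * hαβ
  have hs11 : s 1 1 = γ * α := by
    rw [hγdef]; linear_combination β * E1 - s 1 1 * hαβ
  have hs10le : |s 1 0| ≤ N/50000000 := by
    have : |s 1 0| = |γ| * |β| := by rw [hs10, abs_mul, abs_neg]
    nlinarith [abs_nonneg γ, abs_nonneg β]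
  have hs11le : |s 1 1| ≤ N/50000000 := by
    have : |s 1 1| = |γ| * |α| := by rw [hs11, abs_mul]
    nlinarith [abs_nonneg γ, abs_nonneg α]
  have hs00le : |s 0 0| ≤ N/4000 := by
    have h1 : |s 0 0| ≤ |s 0 0 + s 1 1| + |s 1 1| := by
      have := abs_add_le (s 0 0 + s 1 1) (-(s 1 1))
      simpa using this
    linarith
  have hs01ge : 0.79*N ≤ |s 0 1| := by
    have a1 : |s 0 0 * α| ≤ |s 0 0| * 1 := amul (le_refl _) hαle
    have a2 : |s 0 1 * β| ≤ |s 0 1| * 1 := amul (le_refl _) hβle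
    have h1 : a ≤ |s 0 0| + |s 0 1| := by
      have h0 : a = |s 0 0 * α + s 0 1 * β| := by rw [E0, abs_of_pos (by linarith : (0:ℝ) < a)]
      have hb := abs_add_le (s 0 0 * α) (s 0 1 * β)
      rw [mul_one] at a1 a2
      linarith
    linarith
  have ht10 : |t 1 0| ≤ N/1500 := by
    have h1 : |s 0 1 * t 1 0| ≤ N^2/50000000 + (N/4000)*(2*N) + (N/50000000)*(2*N) + (N/50000000)*(2*N) := by
      have h2 : s 0 1 * t 1 0 = (s 0 0 * t 0 0 + s 0 1 * t 1 0 + s 1 0 * t 0 1 + s 1 1 * t 1 1)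
          + (-(s 0 0 * t 0 0)) + (-(s 1 0 * t 0 1)) + (-(s 1 1 * t 1 1)) := by ring
      rw [h2]
      have h3 := abs_add4 (s 0 0 * t 0 0 + s 0 1 * t 1 0 + s 1 0 * t 0 1 + s 1 1 * t 1 1)
        (-(s 0 0 * t 0 0)) (-(s 1 0 * t 0 1)) (-(s 1 1 * t 1 1))
      rw [abs_neg, abs_neg, abs_neg] at h3
      have b1 := amul hs00le (ht_bound 0 0)
      have b2 := amul hs10le (ht_bound 0 1)
      have b3 := amul hs11le (ht_bound 1 1)
      linarith
    have h4 : 0.79*N * |t 1 0| ≤ |s 0 1| * |t 1 0| :=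
      mul_le_mul_of_nonneg_right hs01ge (abs_nonneg _)
    rw [← abs_mul] at h4
    nlinarith [abs_nonneg (t 1 0), sq_nonneg N]
  have hdiag : |t 0 0 * t 1 1| ≤ N^2/100000000 + (2*N)*(N/1500) := by
    have h2 : t 0 0 * t 1 1 = (t 0 0 * t 1 1 - t 0 1 * t 1 0) + t 0 1 * t 1 0 := by ring
    rw [h2]
    have := abs_add_le (t 0 0 * t 1 1 - t 0 1 * t 1 0) (t 0 1 * t 1 0)
    have b1 := amul (ht_bound 0 1) ht10
    linarith
  have key : ∀ x y : ℝ, |x + y| ≤ N/5000 → |x| ≤ 2*N → |x*y| ≤ N^2/100000000 + (2*N)*(N/1500) →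
      |x| ≤ N/20 := by
    intro x y h1 h2 h3
    have hxx : |x|^2 ≤ (2*N)*(N/5000) + |x*y| := by
      have e2 : x * x = x*(x + y) - x*y := by ring
      have e3 : |x*x| ≤ |x| * |x + y| + |x*y| := by
        rw [e2]
        calc |x*(x+y) - x*y| ≤ |x*(x+y)| + |x*y| := abs_sub _ _
          _ = |x| * |x + y| + |x*y| := by rw [abs_mul]
      have e6 : |x| * |x + y| ≤ (2*N)*(N/5000) :=
        mul_le_mul h2 h1 (abs_nonneg _) (by linarith)
      calc |x|^2 = |x*x| := by rw [abs_mul]; ring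
        _ ≤ (2*N)*(N/5000) + |x*y| := by linarith
    nlinarith [abs_nonneg x, sq_nonneg N]
  refine ⟨ht10, key _ (t 1 1) ht_tr (ht_bound 0 0) hdiag, key _ (t 0 0) ?_ (ht_bound 1 1) ?_⟩
  · rw [add_comm]; exact ht_tr
  · rw [mul_comm]; exact hdiag

lemma opNorm_conj_le {R Rinv : Matrix (Fin 2) (Fin 2) ℝ} (hR : opNorm R ≤ 1)
    (hRi : opNorm Rinv ≤ 1) (t : Matrix (Fin 2) (Fin 2) ℝ) :
    opNorm (R*t*Rinv) ≤ opNorm t := by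
  calc opNorm (R*t*Rinv) ≤ opNorm (R*t) * opNorm Rinv := opNorm_mul_le _ _
    _ ≤ opNorm (R*t) * 1 := by
        exact mul_le_mul_of_nonneg_left hRi (opNorm_nonneg _)
    _ = opNorm (R*t) := mul_one _
    _ ≤ opNorm R * opNorm t := opNorm_mul_le _ _
    _ ≤ 1 * opNorm t := mul_le_mul_of_nonneg_right hR (opNorm_nonneg _)
    _ = opNorm t := one_mul _

lemma trace_conj {R Rinv : Matrix (Fin 2) (Fin 2) ℝ} (hRR' : Rinv * R = 1)
    (t : Matrix (Fin 2) (Fin 2) ℝ) :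
    (R*t*Rinv) 0 0 + (R*t*Rinv) 1 1 = t 0 0 + t 1 1 := by
  have h := Matrix.trace_mul_cycle R t Rinv
  rw [hRR', one_mul] at h
  rw [← Matrix.trace_fin_two, ← Matrix.trace_fin_two]
  exact h

lemma det_conj {R Rinv : Matrix (Fin 2) (Fin 2) ℝ} (hRR : R * Rinv = 1)
    (t : Matrix (Fin 2) (Fin 2) ℝ) :
    (R*t*Rinv) 0 0 * (R*t*Rinv) 1 1 - (R*t*Rinv) 0 1 * (R*t*Rinv) 1 0
      = t 0 0 * t 1 1 - t 0 1 * t 1 0 := by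
  rw [← Matrix.det_fin_two, ← Matrix.det_fin_two]
  have h1 : R.det * Rinv.det = 1 := by
    rw [← Matrix.det_mul, hRR, Matrix.det_one]
  rw [Matrix.det_mul, Matrix.det_mul]
  linear_combination t.det * h1

lemma conjMulConj {R Rinv : Matrix (Fin 2) (Fin 2) ℝ} (hRR' : Rinv * R = 1)
    (s t : Matrix (Fin 2) (Fin 2) ℝ) :
    (R*s*Rinv) * (R*t*Rinv) = R*(s*t)*Rinv := by
  simp only [mul_assoc]
  rw [← mul_assoc Rinv R (t*Rinv), hRR', one_mul]

lemma pipeline (N : ℝ) (hN : 1 ≤ N) (T : Set (Matrix (Fin 2) (Fin 2) ℝ))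
    (s : Matrix (Fin 2) (Fin 2) ℝ) (hsT : s ∈ T)
    (hb : ∀ t ∈ T, opNorm t ≤ 2*N)
    (hsn : 0.9*N ≤ opNorm s)
    (htr : ∀ t ∈ T, |t 0 0 + t 1 1| ≤ N/5000)
    (hdet : ∀ t ∈ T, |t 0 0 * t 1 1 - t 0 1 * t 1 0| ≤ N^2/100000000)
    (htrs : ∀ t ∈ T, |(s*t) 0 0 + (s*t) 1 1| ≤ N^2/50000000) :
    ∃ P Pinv : Matrix (Fin 2) (Fin 2) ℝ, P * Pinv = 1 ∧ Pinv * P = 1 ∧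
      ∀ t ∈ T, opNorm (P * t * Pinv) ≤ N/4 := by
  have hN0 : 0 < N := by linarith
  obtain ⟨R, Rinv, α, β, a, hRR, hRR', hRn, hRin, hαβ, ha, hvec⟩ :=
    exists_rotation s N hN0 hsn
  set s' := R*s*Rinv with hs'
  have E0 : s' 0 0 * α + s' 0 1 * β = a := by
    have h := congrFun hvec 0
    rw [mulVec_two] at h
    simpa using h
  have E1 : s' 1 0 * α + s' 1 1 * β = 0 := by
    have h := congrFun hvec 1
    rw [mulVec_two] at h
    simpa using h
  have hs'tr : |s' 0 0 + s' 1 1| ≤ N/5000 := by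
    rw [hs', trace_conj hRR']
    exact htr s hsT
  have hs'det : |s' 0 0 * s' 1 1 - s' 0 1 * s' 1 0| ≤ N^2/100000000 := by
    rw [hs', det_conj hRR]
    exact hdet s hsT
  -- diagonal conjugation matrices
  set D : Matrix (Fin 2) (Fin 2) ℝ := !![(1:ℝ)/20, 0; 0, 1] with hD
  set Dinv : Matrix (Fin 2) (Fin 2) ℝ := !![(20:ℝ), 0; 0, 1] with hDinv
  have hDD : D * Dinv = 1 := by
    ext i j
    fin_cases i <;> fin_cases j <;> simp [hD, hDinv, Matrix.mul_apply, Fin.sum_univ_two] <;> norm_num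
  have hDD' : Dinv * D = 1 := by
    ext i j
    fin_cases i <;> fin_cases j <;> simp [hD, hDinv, Matrix.mul_apply, Fin.sum_univ_two] <;> norm_num
  refine ⟨D * R, Rinv * Dinv, ?_, ?_, ?_⟩
  · calc D * R * (Rinv * Dinv) = D * (R * Rinv) * Dinv := by
          simp only [mul_assoc]
      _ = 1 := by rw [hRR, mul_one, hDD]
  · calc Rinv * Dinv * (D * R) = Rinv * (Dinv * D) * R := by
          simp only [mul_assoc]
      _ = 1 := by rw [hDD', mul_one, hRR']
  intro t htT
  set t' := R*t*Rinv with ht'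
  have htb' : ∀ i j, |t' i j| ≤ 2*N := by
    intro i j
    calc |t' i j| ≤ opNorm t' := abs_entry_le_opNorm _ i j
      _ ≤ opNorm t := opNorm_conj_le hRn hRin t
      _ ≤ 2*N := hb t htT
  have ht'tr : |t' 0 0 + t' 1 1| ≤ N/5000 := by
    rw [ht', trace_conj hRR']; exact htr t htT
  have ht'det : |t' 0 0 * t' 1 1 - t' 0 1 * t' 1 0| ≤ N^2/100000000 := by
    rw [ht', det_conj hRR]; exact hdet t htT
  have hst'tr : |s' 0 0 * t' 0 0 + s' 0 1 * t' 1 0 + s' 1 0 * t' 0 1 + s' 1 1 * t' 1 1| ≤ N^2/50000000 := by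
    have hexp : (s'*t') 0 0 + (s'*t') 1 1
        = s' 0 0 * t' 0 0 + s' 0 1 * t' 1 0 + s' 1 0 * t' 0 1 + s' 1 1 * t' 1 1 := by
      simp [Matrix.mul_apply, Fin.sum_univ_two]
      ring
    rw [← hexp, hs', ht', conjMulConj hRR', trace_conj hRR']
    exact htrs t htT
  obtain ⟨h10, h00, h11⟩ := core_bound N hN s' t' α β a hαβ ha E0 E1 hs'tr hs'det htb' ht'tr ht'det hst'tr
  have hfin : D * R * t * (Rinv * Dinv) = D * t' * Dinv := by
    rw [ht']
    simp only [mul_assoc]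
  rw [hfin]
  have hentry : D * t' * Dinv = !![t' 0 0, (1/20) * t' 0 1; 20 * t' 1 0, t' 1 1] := by
    ext i j
    fin_cases i <;> fin_cases j <;> simp [hD, hDinv, Matrix.mul_apply, Matrix.vecMul, dotProduct, Fin.sum_univ_two] <;> ring
  rw [hentry]
  have hsum := opNorm_le_sum_abs !![t' 0 0, (1/20) * t' 0 1; 20 * t' 1 0, t' 1 1]
  have e00 : (!![t' 0 0, (1/20) * t' 0 1; 20 * t' 1 0, t' 1 1] : Matrix (Fin 2) (Fin 2) ℝ) 0 0 = t' 0 0 := by simp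
  have e01 : (!![t' 0 0, (1/20) * t' 0 1; 20 * t' 1 0, t' 1 1] : Matrix (Fin 2) (Fin 2) ℝ) 0 1 = (1/20) * t' 0 1 := by simp
  have e10 : (!![t' 0 0, (1/20) * t' 0 1; 20 * t' 1 0, t' 1 1] : Matrix (Fin 2) (Fin 2) ℝ) 1 0 = 20 * t' 1 0 := by simp
  have e11 : (!![t' 0 0, (1/20) * t' 0 1; 20 * t' 1 0, t' 1 1] : Matrix (Fin 2) (Fin 2) ℝ) 1 1 = t' 1 1 := by simp
  rw [e00, e01, e10, e11] at hsum
  have a01 : |(1/20) * t' 0 1| ≤ (1/20) * (2*N) := by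
    rw [abs_mul]
    have : |(1:ℝ)/20| = 1/20 := by norm_num
    rw [this]
    have := htb' 0 1
    linarith
  have a10 : |20 * t' 1 0| ≤ 20 * (N/1500) := by
    rw [abs_mul]
    have : |(20:ℝ)| = 20 := by norm_num
    rw [this]
    linarith
  calc opNorm _ ≤ |t' 0 0| + |(1/20) * t' 0 1| + |20 * t' 1 0| + |t' 1 1| := hsum
    _ ≤ N/20 + (1/20)*(2*N) + 20*(N/1500) + N/20 := by linarith
    _ ≤ N/4 := by linarith

lemma mapC_mul (A B : Matrix (Fin 2) (Fin 2) ℝ) :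
    (A * B).map Complex.ofReal = A.map Complex.ofReal * B.map Complex.ofReal := by
  ext i j
  simp [Matrix.mul_apply, Matrix.map_apply, Fin.sum_univ_two]

lemma mapC_one : (1 : Matrix (Fin 2) (Fin 2) ℝ).map Complex.ofReal = 1 := by
  ext i j
  fin_cases i <;> fin_cases j <;> simp [Matrix.map_apply]

lemma isEigenvalue_conj (g : GL (Fin 2) ℝ) (q : Matrix (Fin 2) (Fin 2) ℝ) (lam : ℂ)
    (h : IsEigenvalue q lam) :
    IsEigenvalue ((g : Matrix (Fin 2) (Fin 2) ℝ) * q * ((g⁻¹ : GL (Fin 2) ℝ) : Matrix (Fin 2) (Fin 2) ℝ)) lam := by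
  obtain ⟨v, hv, he⟩ := h
  set G := ((g : Matrix (Fin 2) (Fin 2) ℝ)).map Complex.ofReal with hG
  set G' := (((g⁻¹ : GL (Fin 2) ℝ) : Matrix (Fin 2) (Fin 2) ℝ)).map Complex.ofReal with hG'
  have hGG' : G * G' = 1 := by rw [hG, hG', ← mapC_mul, g.mul_inv, mapC_one]
  have hG'G : G' * G = 1 := by rw [hG, hG', ← mapC_mul, g.inv_mul, mapC_one]
  refine ⟨G.mulVec v, ?_, ?_⟩
  · intro hz
    apply hv
    have : (G' * G).mulVec v = G'.mulVec (G.mulVec v) := (Matrix.mulVec_mulVec _ _ _).symm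
    rw [hG'G, Matrix.one_mulVec, hz] at this
    rw [this, Matrix.mulVec_zero]
  · rw [mapC_mul, mapC_mul]
    rw [Matrix.mulVec_mulVec, mul_assoc (G * q.map Complex.ofReal) G' G, hG'G, mul_one,
      ← Matrix.mulVec_mulVec, he, Matrix.mulVec_smul]

lemma setNorm_nonneg (Q : Set (Matrix (Fin 2) (Fin 2) ℝ)) : 0 ≤ setNorm Q := by
  apply Real.sSup_nonneg
  rintro y ⟨q, _, rfl⟩
  exact opNorm_nonneg q

lemma bddAbove_conj (g : GL (Fin 2) ℝ) {Q : Set (Matrix (Fin 2) (Fin 2) ℝ)} {B : ℝ}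
    (hQ : ∀ q ∈ Q, opNorm q ≤ B) :
    BddAbove (opNorm '' ((fun m => (g : Matrix (Fin 2) (Fin 2) ℝ) * m * ((g⁻¹ : GL (Fin 2) ℝ) : Matrix (Fin 2) (Fin 2) ℝ)) '' Q)) := by
  refine ⟨opNorm (g : Matrix (Fin 2) (Fin 2) ℝ) * max B 0 * opNorm ((g⁻¹ : GL (Fin 2) ℝ) : Matrix (Fin 2) (Fin 2) ℝ), ?_⟩
  rintro y ⟨x, ⟨q, hq, rfl⟩, rfl⟩
  calc opNorm ((g : Matrix (Fin 2) (Fin 2) ℝ) * q * ((g⁻¹ : GL (Fin 2) ℝ) : Matrix (Fin 2) (Fin 2) ℝ))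
      ≤ opNorm ((g : Matrix (Fin 2) (Fin 2) ℝ) * q) * opNorm ((g⁻¹ : GL (Fin 2) ℝ) : Matrix (Fin 2) (Fin 2) ℝ) := opNorm_mul_le _ _
    _ ≤ (opNorm (g : Matrix (Fin 2) (Fin 2) ℝ) * max B 0) * opNorm ((g⁻¹ : GL (Fin 2) ℝ) : Matrix (Fin 2) (Fin 2) ℝ) := by
        apply mul_le_mul_of_nonneg_right _ (opNorm_nonneg _)
        calc opNorm ((g : Matrix (Fin 2) (Fin 2) ℝ) * q)
            ≤ opNorm (g : Matrix (Fin 2) (Fin 2) ℝ) * opNorm q := opNorm_mul_le _ _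
          _ ≤ opNorm (g : Matrix (Fin 2) (Fin 2) ℝ) * max B 0 := by
              apply mul_le_mul_of_nonneg_left _ (opNorm_nonneg _)
              exact le_trans (hQ q hq) (le_max_left _ _)

lemma minNorm_bddBelow (Q : Set (Matrix (Fin 2) (Fin 2) ℝ)) :
    BddBelow (Set.range fun g : GL (Fin 2) ℝ =>
      setNorm ((fun s => (g : Matrix (Fin 2) (Fin 2) ℝ) * s * ((g⁻¹ : GL (Fin 2) ℝ) : Matrix (Fin 2) (Fin 2) ℝ)) '' Q)) := by
  refine ⟨0, ?_⟩
  rintro y ⟨g, rfl⟩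
  exact setNorm_nonneg _

/-- **Spectral Radius Lemma.** There exists `c ∈ (0,1)` such that for every bounded subset
`S` of the `2×2` real matrices containing the identity,
`E(S²) ≥ Λ(S²) ≥ c² E(S)²`. -/
theorem spectral_radius_lemma :
    ∃ c : ℝ, c ∈ Set.Ioo (0 : ℝ) 1 ∧
      ∀ S : Set (Matrix (Fin 2) (Fin 2) ℝ),
        (∃ C : ℝ, ∀ A ∈ S, opNorm A ≤ C) → (1 : Matrix (Fin 2) (Fin 2) ℝ) ∈ S →
        matLambda (S * S) ≤ minNorm (S * S) ∧ c ^ 2 * minNorm S ^ 2 ≤ matLambda (S * S) := by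
  refine ⟨1/10000, ⟨by norm_num, by norm_num⟩, ?_⟩
  rintro S ⟨C, hC⟩ h1S
  have hC1 : (1:ℝ) ≤ C := by
    have := hC 1 h1S
    rwa [opNorm_one] at this
  have hSS : ∀ q ∈ S*S, opNorm q ≤ C*C := by
    intro q hq
    rw [Set.mem_mul] at hq
    obtain ⟨x, hx, y, hy, rfl⟩ := hq
    calc opNorm (x*y) ≤ opNorm x * opNorm y := opNorm_mul_le _ _
      _ ≤ C*C := mul_le_mul (hC x hx) (hC y hy) (opNorm_nonneg y) (by linarith)
  have hBdd : BddAbove {x : ℝ | ∃ q ∈ S*S, ∃ lam : ℂ, IsEigenvalue q lam ∧ x = ‖lam‖} := by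
    refine ⟨2*(C*C), ?_⟩
    rintro x ⟨q, hq, lam, hlam, rfl⟩
    have h1 := abs_eigen_le_two_opNorm hlam
    have h2 := hSS q hq
    linarith
  constructor
  · -- part 1
    apply le_ciInf
    intro g
    apply Real.sSup_le
    · rintro x ⟨q, hq, lam, hlam, rfl⟩
      have h1 := isEigenvalue_conj g q lam hlam
      have h2 := abs_eigen_le_opNorm h1
      have h3 : opNorm ((g : Matrix (Fin 2) (Fin 2) ℝ) * q * ((g⁻¹ : GL (Fin 2) ℝ) : Matrix (Fin 2) (Fin 2) ℝ)) ≤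
          setNorm ((fun s => (g : Matrix (Fin 2) (Fin 2) ℝ) * s * ((g⁻¹ : GL (Fin 2) ℝ) : Matrix (Fin 2) (Fin 2) ℝ)) '' (S*S)) :=
        le_csSup (bddAbove_conj g hSS) (Set.mem_image_of_mem _ (Set.mem_image_of_mem _ hq))
      exact le_trans h2 h3
    · exact setNorm_nonneg _
  · -- part 2
    by_contra hcon
    push_neg at hcon
    set N := minNorm S with hNdef
    have hN1 : (1:ℝ) ≤ N := by
      rw [hNdef, minNorm]
      apply le_ciInf
      intro g
      have hmem : (1 : Matrix (Fin 2) (Fin 2) ℝ) ∈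
          (fun m => (g : Matrix (Fin 2) (Fin 2) ℝ) * m * ((g⁻¹ : GL (Fin 2) ℝ) : Matrix (Fin 2) (Fin 2) ℝ)) '' S := by
        refine ⟨1, h1S, ?_⟩
        dsimp only
        rw [mul_one]
        exact g.mul_inv
      have h1 : opNorm 1 ≤ setNorm
          ((fun m => (g : Matrix (Fin 2) (Fin 2) ℝ) * m * ((g⁻¹ : GL (Fin 2) ℝ) : Matrix (Fin 2) (Fin 2) ℝ)) '' S) :=
        le_csSup (bddAbove_conj g hC) ⟨1, hmem, rfl⟩
      rwa [opNorm_one] at h1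
    have hN0 : (0:ℝ) < N := by linarith
    have hmatL : matLambda (S*S) < (1/10000)^2 * N^2 := hcon
    have hlamB : ∀ q ∈ S*S, ∀ lam : ℂ, IsEigenvalue q lam → ‖lam‖ ≤ (1/10000)^2*N^2 := by
      intro q hq lam h
      have h1 : ‖lam‖ ≤ matLambda (S*S) := le_csSup hBdd ⟨q, hq, lam, h, rfl⟩
      linarith
    have hEigS : ∀ t ∈ S, ∀ lam : ℂ, IsEigenvalue t lam → ‖lam‖ ≤ (1/10000)*N := by
      intro t ht lam h
      have h2 := isEigenvalue_sq h
      have h3 := hlamB (t*t) (Set.mul_mem_mul ht ht) _ h2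
      have h4 : ‖lam^2‖ = ‖lam‖ ^ 2 := norm_pow _ _
      nlinarith [norm_nonneg lam, hN0]
    have htrS : ∀ t ∈ S, |t 0 0 + t 1 1| ≤ N/5000 := by
      intro t ht
      obtain ⟨l1, l2, he1, he2, hsum, _⟩ := exists_eigenvalues t
      have b1 := hEigS t ht l1 he1
      have b2 := hEigS t ht l2 he2
      have hcast : ((t 0 0 + t 1 1 : ℝ) : ℂ) = l1 + l2 := by
        rw [Complex.ofReal_add, ← hsum]
      calc |t 0 0 + t 1 1| = ‖((t 0 0 + t 1 1 : ℝ) : ℂ)‖ := (by rw [Complex.norm_real, Real.norm_eq_abs])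
        _ = ‖l1 + l2‖ := by rw [hcast]
        _ ≤ ‖l1‖ + ‖l2‖ := norm_add_le _ _
        _ ≤ N/5000 := by linarith
    have hdetS : ∀ t ∈ S, |t 0 0 * t 1 1 - t 0 1 * t 1 0| ≤ N^2/100000000 := by
      intro t ht
      obtain ⟨l1, l2, he1, he2, _, hprod⟩ := exists_eigenvalues t
      have b1 := hEigS t ht l1 he1
      have b2 := hEigS t ht l2 he2
      have hcast : ((t 0 0 * t 1 1 - t 0 1 * t 1 0 : ℝ) : ℂ) = l1 * l2 := by
        rw [Complex.ofReal_sub, Complex.ofReal_mul, Complex.ofReal_mul, ← hprod]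
      calc |t 0 0 * t 1 1 - t 0 1 * t 1 0| = ‖((t 0 0 * t 1 1 - t 0 1 * t 1 0 : ℝ) : ℂ)‖ :=
            (by rw [Complex.norm_real, Real.norm_eq_abs])
        _ = ‖l1‖ * ‖l2‖ := by rw [hcast, norm_mul]
        _ ≤ ((1/10000)*N) * ((1/10000)*N) :=
            mul_le_mul b1 b2 (norm_nonneg _) (by positivity)
        _ = N^2/100000000 := by ring
    have htrPS : ∀ p ∈ S, ∀ t ∈ S, |(p*t) 0 0 + (p*t) 1 1| ≤ N^2/50000000 := by
      intro p hp t ht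
      obtain ⟨l1, l2, he1, he2, hsum, _⟩ := exists_eigenvalues (p*t)
      have hqm : p*t ∈ S*S := Set.mul_mem_mul hp ht
      have b1 := hlamB (p*t) hqm l1 he1
      have b2 := hlamB (p*t) hqm l2 he2
      have hcast : (((p*t) 0 0 + (p*t) 1 1 : ℝ) : ℂ) = l1 + l2 := by
        rw [Complex.ofReal_add, ← hsum]
      calc |(p*t) 0 0 + (p*t) 1 1| = ‖(((p*t) 0 0 + (p*t) 1 1 : ℝ) : ℂ)‖ :=
            (by rw [Complex.norm_real, Real.norm_eq_abs])
        _ = ‖l1 + l2‖ := by rw [hcast]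
        _ ≤ ‖l1‖ + ‖l2‖ := norm_add_le _ _
        _ ≤ (1/10000)^2*N^2 + (1/10000)^2*N^2 := by linarith
        _ = N^2/50000000 := by ring
    -- choose a near-optimal conjugation
    have hlt : minNorm S < 1.2*N := by rw [← hNdef]; linarith
    obtain ⟨g₀, hg₀⟩ := exists_lt_of_ciInf_lt hlt
    set T := (fun m => (g₀ : Matrix (Fin 2) (Fin 2) ℝ) * m * ((g₀⁻¹ : GL (Fin 2) ℝ) : Matrix (Fin 2) (Fin 2) ℝ)) '' S with hTdef
    have hbT : ∀ x ∈ T, opNorm x ≤ 2*N := by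
      intro x hx
      have h1 : opNorm x ≤ setNorm T := le_csSup (by rw [hTdef]; exact bddAbove_conj g₀ hC) (Set.mem_image_of_mem _ hx)
      have h2 : setNorm T < 1.2*N := hg₀
      linarith
    have hTnonempty : (opNorm '' T).Nonempty := ⟨opNorm _, Set.mem_image_of_mem _ (Set.mem_image_of_mem _ h1S)⟩
    have hNle : N ≤ setNorm T := ciInf_le (minNorm_bddBelow S) g₀
    obtain ⟨y, hymem, hy⟩ := exists_lt_of_lt_csSup hTnonempty (lt_of_lt_of_le (by linarith : 0.9*N < N) hNle)
    obtain ⟨sT, hsT, rfl⟩ := hymem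
    have htrT : ∀ x ∈ T, |x 0 0 + x 1 1| ≤ N/5000 := by
      rintro x ⟨t, ht, rfl⟩
      dsimp only
      rw [trace_conj g₀.inv_mul]
      exact htrS t ht
    have hdetT : ∀ x ∈ T, |x 0 0 * x 1 1 - x 0 1 * x 1 0| ≤ N^2/100000000 := by
      rintro x ⟨t, ht, rfl⟩
      dsimp only
      rw [det_conj g₀.mul_inv]
      exact hdetS t ht
    obtain ⟨s₀, hs₀, hs₀eq⟩ := hsT
    have htrsT : ∀ x ∈ T, |(sT*x) 0 0 + (sT*x) 1 1| ≤ N^2/50000000 := by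
      rintro x ⟨t, ht, rfl⟩
      dsimp only
      rw [← hs₀eq]
      dsimp only
      rw [conjMulConj g₀.inv_mul, trace_conj g₀.inv_mul]
      exact htrPS s₀ hs₀ t ht
    have hsTmem : sT ∈ T := ⟨s₀, hs₀, hs₀eq⟩
    obtain ⟨P, Pinv, hP1, hP2, hPb⟩ :=
      pipeline N hN1 T sT hsTmem hbT (le_of_lt hy) htrT hdetT htrsT
    set g₁ : GL (Fin 2) ℝ := (⟨P, Pinv, hP1, hP2⟩ : GL (Fin 2) ℝ) * g₀ with hg₁
    have hcoe1 : (g₁ : Matrix (Fin 2) (Fin 2) ℝ) = P * (g₀ : Matrix (Fin 2) (Fin 2) ℝ) := rfl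
    have hcoe2 : ((g₁⁻¹ : GL (Fin 2) ℝ) : Matrix (Fin 2) (Fin 2) ℝ)
        = ((g₀⁻¹ : GL (Fin 2) ℝ) : Matrix (Fin 2) (Fin 2) ℝ) * Pinv := by
      rw [hg₁, mul_inv_rev]
      rfl
    have hfin : setNorm ((fun m => (g₁ : Matrix (Fin 2) (Fin 2) ℝ) * m * ((g₁⁻¹ : GL (Fin 2) ℝ) : Matrix (Fin 2) (Fin 2) ℝ)) '' S) ≤ N/4 := by
      apply Real.sSup_le
      · rintro y ⟨x, ⟨m, hmS, rfl⟩, rfl⟩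
        dsimp only
        have heq : (g₁ : Matrix (Fin 2) (Fin 2) ℝ) * m * ((g₁⁻¹ : GL (Fin 2) ℝ) : Matrix (Fin 2) (Fin 2) ℝ)
            = P * ((g₀ : Matrix (Fin 2) (Fin 2) ℝ) * m * ((g₀⁻¹ : GL (Fin 2) ℝ) : Matrix (Fin 2) (Fin 2) ℝ)) * Pinv := by
          rw [hcoe1, hcoe2]
          simp only [mul_assoc]
        rw [heq]
        exact hPb _ (Set.mem_image_of_mem _ hmS)
      · linarith
    have hminle : N ≤ N/4 := le_trans (ciInf_le (minNorm_bddBelow S) g₁) hfin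
    linarith
end
end

section
/- Let G be a group acting on a set X and let a, b ∈ G. If there exist four pairwise disjoint nonempty subsets A⁺, A⁻, B⁺, B⁻ of X such that a·(X ∖ A⁻) ⊆ A⁺ and b·(X ∖ B⁻) ⊆ B⁺, then a and b freely generate a free subgroup of rank 2 of G. -/
open scoped Pointwise
/-- `a` and `b` freely generate a free subgroup of rank 2: the homomorphism from the free
group on two generators sending the generators to `a` and `b` is injective. -/
def FreelyGenerate {G : Type*} [Group G] (a b : G) : Prop :=
  Function.Injective (FreeGroup.lift (fun x : Bool => if x then a else b) : FreeGroup Bool →* G)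

/-- A group is virtually solvable if it has a solvable subgroup of finite index. -/
def IsVirtuallySolvable (G : Type*) [Group G] : Prop :=
  ∃ H : Subgroup G, H.FiniteIndex ∧ IsSolvable H

open scoped Pointwise in
/-- **Abstract Ping-Pong Lemma.** If `a (X ∖ A⁻) ⊆ A⁺` and `b (X ∖ B⁻) ⊆ B⁺` for four
pairwise disjoint nonempty subsets `A⁺, A⁻, B⁺, B⁻` of `X`, then `a` and `b` freely generate
a free subgroup of rank 2. -/
theorem abstract_ping_pong {G X : Type*} [Group G] [MulAction G X] (a b : G)
    (Ap Am Bp Bm : Set X)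
    (hAp : Ap.Nonempty) (hAm : Am.Nonempty) (hBp : Bp.Nonempty) (hBm : Bm.Nonempty)
    (h₁ : Disjoint Ap Am) (h₂ : Disjoint Ap Bp) (h₃ : Disjoint Ap Bm)
    (h₄ : Disjoint Am Bp) (h₅ : Disjoint Am Bm) (h₆ : Disjoint Bp Bm)
    (ha : a • (Set.univ \ Am) ⊆ Ap) (hb : b • (Set.univ \ Bm) ⊆ Bp) :
    FreelyGenerate a b := by
  have ha' : ∀ x : X, x ∉ Am → a • x ∈ Ap := fun x hx => ha ⟨x, ⟨trivial, hx⟩, rfl⟩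
  have hb' : ∀ x : X, x ∉ Bm → b • x ∈ Bp := fun x hx => hb ⟨x, ⟨trivial, hx⟩, rfl⟩
  let f : ULift.{u_1} Bool → G := fun i => if i.down then a else b
  let Xs : ULift.{u_1} Bool → Set X := fun i => if i.down then Ap else Bp
  let Ys : ULift.{u_1} Bool → Set X := fun i => if i.down then Am else Bm
  have hXnonempty : ∀ i, (Xs i).Nonempty := by rintro ⟨i⟩; cases i <;> simpa [Xs]
  have hXdisj : Pairwise (Function.onFun Disjoint Xs) := by
    rintro ⟨i⟩ ⟨j⟩ hij; cases i <;> cases j <;>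
      first | exact absurd rfl hij | exact h₂ | exact h₂.symm
  have hYdisj : Pairwise (Function.onFun Disjoint Ys) := by
    rintro ⟨i⟩ ⟨j⟩ hij; cases i <;> cases j <;>
      first | exact absurd rfl hij | exact h₅ | exact h₅.symm
  have hXYdisj : ∀ i j, Disjoint (Xs i) (Ys j) := by
    rintro ⟨i⟩ ⟨j⟩; cases i <;> cases j <;>
      first | exact h₆ | exact h₄.symm | exact h₃ | exact h₁
  have hX : ∀ i, f i • (Ys i)ᶜ ⊆ Xs i := by
    rintro ⟨i⟩ x ⟨y, hy, rfl⟩; cases i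
    · exact hb' y hy
    · exact ha' y hy
  have hY : ∀ i, f⁻¹ i • (Xs i)ᶜ ⊆ Ys i := by
    rintro ⟨i⟩ x ⟨y, hy, rfl⟩; cases i
    · show b⁻¹ • y ∈ Bm
      by_contra hc
      exact hy (by simpa [Xs] using hb' _ hc)
    · show a⁻¹ • y ∈ Am
      by_contra hc
      exact hy (by simpa [Xs] using ha' _ hc)
  have hinj := FreeGroup.injective_lift_of_ping_pong f Xs Ys hXnonempty hXdisj hYdisj hXYdisj hX hY
  unfold FreelyGenerate
  have heq : (FreeGroup.lift (fun x : Bool => if x then a else b) : FreeGroup Bool →* G)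
      = (FreeGroup.lift f).comp (FreeGroup.freeGroupCongr (Equiv.ulift.symm)).toMonoidHom := by
    ext x; cases x <;> simp [f, Equiv.ulift]
  rw [heq]
  exact hinj.comp (FreeGroup.freeGroupCongr (Equiv.ulift.symm)).injective
end

section
/- Let u, v ∈ ℝ² be nonzero, let z₁ ≠ z₂ be points of ℝ², and let ε₁, ε₂ ≥ 0 with ε₁ + ε₂ < d([u],[v]). If z ∈ ℝ² satisfies z ≠ z₁, z ≠ z₂, d([z − z₁],[u]) ≤ ε₁, and d([z − z₂],[v]) ≤ ε₂, then ‖z − z₁‖ ≤ ‖z₂ − z₁‖ / (d([u],[v]) − (ε₁ + ε₂)). -/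
open scoped Pointwise
noncomputable section

lemma sq_sum_pos {u : Fin 2 → ℝ} (hu : u ≠ 0) : 0 < u 0 ^ 2 + u 1 ^ 2 := by
  rcases (by positivity : (0:ℝ) ≤ u 0 ^ 2 + u 1 ^ 2).lt_or_eq with h | h
  · exact h
  · exfalso
    apply hu
    funext i
    have h0 : u 0 = 0 := by nlinarith [sq_nonneg (u 0), sq_nonneg (u 1)]
    have h1 : u 1 = 0 := by nlinarith [sq_nonneg (u 0), sq_nonneg (u 1)]
    fin_cases i <;> simpa

lemma enorm2_pos {u : Fin 2 → ℝ} (hu : u ≠ 0) : 0 < enorm2 u :=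
  Real.sqrt_pos.mpr (sq_sum_pos hu)

lemma enorm2_sq (u : Fin 2 → ℝ) : enorm2 u ^ 2 = u 0 ^ 2 + u 1 ^ 2 :=
  Real.sq_sqrt (by positivity)

lemma abs_cross_le (u v : Fin 2 → ℝ) : |cross u v| ≤ enorm2 u * enorm2 v := by
  have h : |cross u v| ^ 2 ≤ (enorm2 u * enorm2 v) ^ 2 := by
    rw [mul_pow, enorm2_sq, enorm2_sq, sq_abs]
    unfold cross
    nlinarith [sq_nonneg (u 0 * v 0 + u 1 * v 1)]
  calc |cross u v| = Real.sqrt (|cross u v| ^ 2) := (Real.sqrt_sq (abs_nonneg _)).symm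
    _ ≤ Real.sqrt ((enorm2 u * enorm2 v) ^ 2) := Real.sqrt_le_sqrt h
    _ = enorm2 u * enorm2 v := Real.sqrt_sq (by unfold enorm2; positivity)

lemma abs_dot_le (u v : Fin 2 → ℝ) : |u 0 * v 0 + u 1 * v 1| ≤ enorm2 u * enorm2 v := by
  have h : |u 0 * v 0 + u 1 * v 1| ^ 2 ≤ (enorm2 u * enorm2 v) ^ 2 := by
    rw [mul_pow, enorm2_sq, enorm2_sq, sq_abs]
    nlinarith [sq_nonneg (u 0 * v 1 - u 1 * v 0)]
  calc |u 0 * v 0 + u 1 * v 1| = Real.sqrt (|u 0 * v 0 + u 1 * v 1| ^ 2) :=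
      (Real.sqrt_sq (abs_nonneg _)).symm
    _ ≤ Real.sqrt ((enorm2 u * enorm2 v) ^ 2) := Real.sqrt_le_sqrt h
    _ = enorm2 u * enorm2 v := Real.sqrt_sq (by unfold enorm2; positivity)

lemma pdist_comm (u v : Fin 2 → ℝ) : pdist u v = pdist v u := by
  unfold pdist cross
  rw [mul_comm (enorm2 u)]
  congr 1
  rw [← abs_neg]
  ring_nf

lemma pdist_triangle {u w v : Fin 2 → ℝ} (hu : u ≠ 0) (hw : w ≠ 0) (hv : v ≠ 0) :
    pdist u v ≤ pdist u w + pdist w v := by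
  have a := enorm2_pos hu
  have b := enorm2_pos hv
  have c := enorm2_pos hw
  unfold pdist
  rw [div_add_div _ _ (by positivity) (by positivity), div_le_div_iff₀ (by positivity) (by positivity)]
  have key : cross u v * (w 0 ^ 2 + w 1 ^ 2) =
      cross u w * (w 0 * v 0 + w 1 * v 1) + (u 0 * w 0 + u 1 * w 1) * cross w v := by
    unfold cross; ring
  have h1 : |cross u v| * (enorm2 w * enorm2 w) ≤
      |cross u w| * (enorm2 w * enorm2 v) + (enorm2 u * enorm2 w) * |cross w v| := by
    have hw2 : enorm2 w * enorm2 w = w 0 ^ 2 + w 1 ^ 2 := by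
      rw [← sq]; exact enorm2_sq w
    rw [hw2]
    calc |cross u v| * (w 0 ^ 2 + w 1 ^ 2) = |cross u v * (w 0 ^ 2 + w 1 ^ 2)| := by
          rw [abs_mul, abs_of_nonneg (show (0:ℝ) ≤ w 0 ^ 2 + w 1 ^ 2 by positivity)]
      _ = |cross u w * (w 0 * v 0 + w 1 * v 1) + (u 0 * w 0 + u 1 * w 1) * cross w v| := by
          rw [key]
      _ ≤ |cross u w| * |w 0 * v 0 + w 1 * v 1| + |u 0 * w 0 + u 1 * w 1| * |cross w v| := by
          refine (abs_add_le _ _).trans ?_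
          rw [abs_mul, abs_mul]
      _ ≤ |cross u w| * (enorm2 w * enorm2 v) + (enorm2 u * enorm2 w) * |cross w v| := by
          gcongr <;> first | exact abs_nonneg _ | exact abs_dot_le _ _
  nlinarith [mul_le_mul_of_nonneg_right h1 (mul_nonneg a.le b.le),
    abs_nonneg (cross u w), abs_nonneg (cross w v), abs_nonneg (cross u v)]

/-- If `z` lies `ε₁`-close (in projective distance) to the line through `z₁` directed by `u`
and `ε₂`-close to the line through `z₂` directed by `v`, with `ε₁ + ε₂ < d([u],[v])`, then
`‖z − z₁‖ ≤ ‖z₂ − z₁‖ / (d([u],[v]) − (ε₁ + ε₂))`. -/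
theorem intersection_distance_bound
    (u v : Fin 2 → ℝ) (hu : u ≠ 0) (hv : v ≠ 0)
    (z z₁ z₂ : Fin 2 → ℝ) (h12 : z₁ ≠ z₂)
    (ε₁ ε₂ : ℝ) (hε₁ : 0 ≤ ε₁) (hε₂ : 0 ≤ ε₂)
    (hlt : ε₁ + ε₂ < pdist u v)
    (hz1 : z ≠ z₁) (hz2 : z ≠ z₂)
    (hd1 : pdist (z - z₁) u ≤ ε₁) (hd2 : pdist (z - z₂) v ≤ ε₂) :
    enorm2 (z - z₁) ≤ enorm2 (z₂ - z₁) / (pdist u v - (ε₁ + ε₂)) := by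
  have ha : z - z₁ ≠ 0 := sub_ne_zero.mpr hz1
  have hb : z - z₂ ≠ 0 := sub_ne_zero.mpr hz2
  have hapos := enorm2_pos ha
  have hbpos := enorm2_pos hb
  have t1 : pdist u v ≤ pdist u (z - z₁) + pdist (z - z₁) v := pdist_triangle hu ha hv
  have t2 : pdist (z - z₁) v ≤ pdist (z - z₁) (z - z₂) + pdist (z - z₂) v :=
    pdist_triangle ha hb hv
  have e1 : pdist u (z - z₁) = pdist (z - z₁) u := pdist_comm _ _
  have hab : pdist u v - (ε₁ + ε₂) ≤ pdist (z - z₁) (z - z₂) := by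
    rw [e1] at t1; linarith
  have hcross : cross (z - z₁) (z - z₂) = cross (z₂ - z₁) (z - z₂) := by
    unfold cross
    simp only [Pi.sub_apply]
    ring
  have hub : pdist (z - z₁) (z - z₂) ≤ enorm2 (z₂ - z₁) / enorm2 (z - z₁) := by
    unfold pdist
    rw [hcross, div_le_div_iff₀ (by positivity) hapos]
    calc |cross (z₂ - z₁) (z - z₂)| * enorm2 (z - z₁)
        ≤ enorm2 (z₂ - z₁) * enorm2 (z - z₂) * enorm2 (z - z₁) := by
          gcongr
          exact abs_cross_le _ _
      _ = enorm2 (z₂ - z₁) * (enorm2 (z - z₁) * enorm2 (z - z₂)) := by ring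
  have hD : 0 < pdist u v - (ε₁ + ε₂) := by linarith
  have key : (pdist u v - (ε₁ + ε₂)) * enorm2 (z - z₁) ≤ enorm2 (z₂ - z₁) := by
    have := hab.trans hub
    rw [le_div_iff₀ hapos] at this
    linarith
  rw [le_div_iff₀ hD]
  linarith
end
end

section
/- Let a be the diagonal 2×2 real matrix diag(λ₁, λ₂) with λ₁, λ₂ nonzero and |λ₁| ≥ |λ₂|. Then for every nonzero v ∈ ℝ², d([a v],[e₁]) · d([v],[e₂]) ≤ |λ₂| / |λ₁|, where e₁, e₂ are the standard basis vectors of ℝ². -/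
open scoped Pointwise
noncomputable section

/-- For a diagonal matrix `a = diag(λ₁, λ₂)` with `λ₁, λ₂ ≠ 0` and `|λ₁| ≥ |λ₂|`, and every
nonzero `v ∈ ℝ²`, `d([a v],[e₁]) · d([v],[e₂]) ≤ |λ₂|/|λ₁|`. -/
theorem diagonal_contraction
    (l₁ l₂ : ℝ) (h₁ : l₁ ≠ 0) (h₂ : l₂ ≠ 0) (hle : |l₂| ≤ |l₁|)
    (v : Fin 2 → ℝ) (hv : v ≠ 0) :
    pdist ((Matrix.diagonal ![l₁, l₂]).mulVec v) ![1, 0] * pdist v ![0, 1] ≤ |l₂| / |l₁| := by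
  have hne : v 0 ≠ 0 ∨ v 1 ≠ 0 := by
    by_contra h
    push_neg at h
    apply hv
    funext i
    fin_cases i
    · exact h.1
    · exact h.2
  have hv0 : v 0 ^ 2 + v 1 ^ 2 > 0 := by
    rcases hne with h | h
    · positivity
    · positivity
  have hav : (l₁ * v 0) ^ 2 + (l₂ * v 1) ^ 2 > 0 := by
    rcases hne with h | h
    · have : l₁ * v 0 ≠ 0 := mul_ne_zero h₁ h
      positivity
    · have : l₂ * v 1 ≠ 0 := mul_ne_zero h₂ h
      positivity
  have sv : Real.sqrt (v 0 ^ 2 + v 1 ^ 2) > 0 := Real.sqrt_pos.2 hv0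
  have sav : Real.sqrt ((l₁ * v 0) ^ 2 + (l₂ * v 1) ^ 2) > 0 := Real.sqrt_pos.2 hav
  have hA : |l₁ * v 0| ≤ Real.sqrt ((l₁ * v 0) ^ 2 + (l₂ * v 1) ^ 2) := by
    rw [← Real.sqrt_sq_eq_abs]
    exact Real.sqrt_le_sqrt (by nlinarith [sq_nonneg (l₂ * v 1)])
  have hB : |v 1| ≤ Real.sqrt (v 0 ^ 2 + v 1 ^ 2) := by
    rw [← Real.sqrt_sq_eq_abs]
    exact Real.sqrt_le_sqrt (by nlinarith [sq_nonneg (v 0)])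
  simp only [pdist, cross, enorm2, Matrix.mulVec_diagonal]
  simp only [Matrix.cons_val_zero, Matrix.cons_val_one, Matrix.head_cons]
  have e0 : Real.sqrt ((1:ℝ)^2 + 0^2) = 1 := by norm_num
  have e1 : Real.sqrt ((0:ℝ)^2 + 1^2) = 1 := by norm_num
  rw [e0, e1]
  simp only [mul_one]
  rw [div_mul_div_comm, div_le_div_iff₀ (by positivity) (abs_pos.2 h₁)]
  have main : |l₁| * |v 0| * |v 1| ≤ Real.sqrt ((l₁ * v 0) ^ 2 + (l₂ * v 1) ^ 2) * Real.sqrt (v 0 ^ 2 + v 1 ^ 2) := by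
    calc |l₁| * |v 0| * |v 1| = |l₁ * v 0| * |v 1| := by rw [abs_mul]
    _ ≤ _ := mul_le_mul hA hB (abs_nonneg _) (le_of_lt sav)
  calc |l₁ * v 0 * 0 - l₂ * v 1| * |v 0 - v 1 * 0| * |l₁|
      = |l₂| * (|l₁| * |v 0| * |v 1|) := by
        rw [show l₁ * v 0 * 0 - l₂ * v 1 = -(l₂ * v 1) by ring,
          show v 0 - v 1 * 0 = v 0 by ring, abs_neg, abs_mul]
        ring
    _ ≤ |l₂| * (Real.sqrt ((l₁ * v 0) ^ 2 + (l₂ * v 1) ^ 2) * Real.sqrt (v 0 ^ 2 + v 1 ^ 2)) :=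
        mul_le_mul_of_nonneg_left main (abs_nonneg _)
end
end

section
/- Let a group G act on a measurable space (X, 𝔐) by measurable bijections, let S ⊆ G, and let n, m ≥ 1 be natural numbers. If X is (S, n+m)-paradoxical with measurable pieces, then for every finitely additive probability measure μ on 𝔐, sup_{g ∈ S} ‖g_*μ − μ‖_TV ≥ 1/(n+m); that is, the action is (S, (n+m)⁻¹)-non-amenable. -/
open scoped Pointwise

section aux
variable {X : Type*} [MeasurableSpace X]

lemma fa_empty (μ : Set X → ℝ)
    (hadd : ∀ C D : Set X, MeasurableSet C → MeasurableSet D → Disjoint C D →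
      μ (C ∪ D) = μ C + μ D) : μ ∅ = 0 := by
  have h := hadd ∅ ∅ MeasurableSet.empty MeasurableSet.empty disjoint_bot_left
  simp at h; linarith

lemma fa_mono (μ : Set X → ℝ)
    (hpos : ∀ C : Set X, MeasurableSet C → 0 ≤ μ C)
    (hadd : ∀ C D : Set X, MeasurableSet C → MeasurableSet D → Disjoint C D →
      μ (C ∪ D) = μ C + μ D)
    {C D : Set X} (hC : MeasurableSet C) (hD : MeasurableSet D) (hsub : C ⊆ D) :
    μ C ≤ μ D := by
  have h : C ∪ (D \ C) = D := Set.union_diff_cancel hsub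
  have h2 : μ D = μ C + μ (D \ C) := by
    rw [← hadd C (D \ C) hC (hD.diff hC) Set.disjoint_sdiff_right, h]
  have := hpos (D \ C) (hD.diff hC)
  linarith

lemma fa_union_le (μ : Set X → ℝ)
    (hpos : ∀ C : Set X, MeasurableSet C → 0 ≤ μ C)
    (hadd : ∀ C D : Set X, MeasurableSet C → MeasurableSet D → Disjoint C D →
      μ (C ∪ D) = μ C + μ D)
    {C D : Set X} (hC : MeasurableSet C) (hD : MeasurableSet D) :
    μ (C ∪ D) ≤ μ C + μ D := by
  have h : C ∪ (D \ C) = C ∪ D := by simp [Set.union_diff_self]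
  have h2 : μ (C ∪ D) = μ C + μ (D \ C) := by
    rw [← hadd C (D \ C) hC (hD.diff hC) Set.disjoint_sdiff_right, h]
  have := fa_mono μ hpos hadd (hD.diff hC) hD Set.diff_subset
  linarith

lemma fa_subadd (μ : Set X → ℝ)
    (hpos : ∀ C : Set X, MeasurableSet C → 0 ≤ μ C)
    (hadd : ∀ C D : Set X, MeasurableSet C → MeasurableSet D → Disjoint C D →
      μ (C ∪ D) = μ C + μ D)
    {ι : Type*} (s : Finset ι) (C : ι → Set X)
    (hC : ∀ i, MeasurableSet (C i)) :
    μ (⋃ i ∈ s, C i) ≤ ∑ i ∈ s, μ (C i) := by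
  classical
  induction s using Finset.induction_on with
  | empty => simp [fa_empty μ hadd]
  | insert a s ha ih =>
      rw [Finset.sum_insert ha, Finset.set_biUnion_insert]
      have hU : MeasurableSet (⋃ i ∈ s, C i) :=
        MeasurableSet.biUnion s.countable_toSet (fun i _ => hC i)
      calc μ (C a ∪ ⋃ i ∈ s, C i) ≤ μ (C a) + μ (⋃ i ∈ s, C i) :=
            fa_union_le μ hpos hadd (hC a) hU
        _ ≤ μ (C a) + ∑ i ∈ s, μ (C i) := by linarith

lemma fa_add (μ : Set X → ℝ)
    (hadd : ∀ C D : Set X, MeasurableSet C → MeasurableSet D → Disjoint C D →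
      μ (C ∪ D) = μ C + μ D)
    {ι : Type*} (s : Finset ι) (C : ι → Set X)
    (hC : ∀ i, MeasurableSet (C i))
    (hdisj : ∀ i j, i ≠ j → Disjoint (C i) (C j)) :
    μ (⋃ i ∈ s, C i) = ∑ i ∈ s, μ (C i) := by
  classical
  induction s using Finset.induction_on with
  | empty => simp [fa_empty μ hadd]
  | insert a s ha ih =>
      rw [Finset.sum_insert ha, Finset.set_biUnion_insert, ← ih]
      have hU : MeasurableSet (⋃ i ∈ s, C i) :=
        MeasurableSet.biUnion s.countable_toSet (fun i _ => hC i)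
      refine hadd _ _ (hC a) hU ?_
      rw [Set.disjoint_iUnion₂_right]
      intro i hi
      exact hdisj a i (by rintro rfl; exact ha hi)
end aux


/-- **Paradoxical implies non-amenable.** If a group `G` acts on a measurable space `X` by
measurable bijections and `X` is `(S, n+m)`-paradoxical with measurable pieces, then for
every finitely additive probability measure `μ` on the measurable sets,
`sup_{g ∈ S} ‖g⁎μ − μ‖_TV ≥ 1/(n+m)`. -/
theorem paradoxical_implies_non_amenable
    {G X : Type*} [Group G] [MulAction G X] [MeasurableSpace X]
    (hmeas : ∀ g : G, Measurable (fun x : X => g • x))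
    (S : Set G) (n m : ℕ) (hn : 1 ≤ n) (hm : 1 ≤ m)
    (g : Fin n → G) (k : Fin m → G)
    (hg : ∀ i, g i ∈ S) (hk : ∀ j, k j ∈ S)
    (A : Fin n → Set X) (B : Fin m → Set X)
    (hAmeas : ∀ i, MeasurableSet (A i)) (hBmeas : ∀ j, MeasurableSet (B j))
    (hAA : ∀ i j, i ≠ j → Disjoint (A i) (A j))
    (hBB : ∀ i j, i ≠ j → Disjoint (B i) (B j))
    (hAB : ∀ i j, Disjoint (A i) (B j))
    (hcovA : (⋃ i, g i • A i) = Set.univ)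
    (hcovB : (⋃ j, k j • B j) = Set.univ)
    (μ : Set X → ℝ)
    (hpos : ∀ C : Set X, MeasurableSet C → 0 ≤ μ C)
    (htot : μ Set.univ = 1)
    (hadd : ∀ C D : Set X, MeasurableSet C → MeasurableSet D → Disjoint C D →
      μ (C ∪ D) = μ C + μ D) :
    sSup {x : ℝ | ∃ s ∈ S, ∃ C : Set X, MeasurableSet C ∧ x = |μ (s⁻¹ • C) - μ C|} ≥
      1 / (n + m) := by
  classical
  set T : Set ℝ :=
    {x : ℝ | ∃ s ∈ S, ∃ C : Set X, MeasurableSet C ∧ x = |μ (s⁻¹ • C) - μ C|} with hT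
  -- smul of a measurable set is measurable
  have hsmul : ∀ (s : G) (C : Set X), MeasurableSet C → MeasurableSet (s • C) := by
    intro s C hC
    have h : (fun x : X => s⁻¹ • x) ⁻¹' C = s • C := by
      rw [Set.preimage_smul, inv_inv]
    rw [← h]
    exact (hmeas s⁻¹) hC
  have hle1 : ∀ C : Set X, MeasurableSet C → μ C ≤ 1 := fun C hC => by
    rw [← htot]; exact fa_mono μ hpos hadd hC MeasurableSet.univ (Set.subset_univ C)
  have hbdd : BddAbove T := by
    refine ⟨1, ?_⟩
    rintro x ⟨s, hs, C, hC, rfl⟩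
    have h1 := hle1 C hC
    have h2 := hle1 _ (hsmul s⁻¹ C hC)
    have h3 := hpos C hC
    have h4 := hpos _ (hsmul s⁻¹ C hC)
    rw [abs_le]; constructor <;> linarith
  -- key estimate
  have key : ∀ s : G, s ∈ S → ∀ C : Set X, MeasurableSet C → μ (s • C) ≤ μ C + sSup T := by
    intro s hs C hC
    have hmem : |μ (s⁻¹ • (s • C)) - μ (s • C)| ∈ T :=
      ⟨s, hs, s • C, hsmul s C hC, rfl⟩
    have hle := le_csSup hbdd hmem
    rw [inv_smul_smul] at hle
    have h2 := neg_le_abs (μ C - μ (s • C))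
    linarith
  have hA1 : (1 : ℝ) ≤ ∑ i, μ (A i) + n * sSup T := by
    calc (1 : ℝ) = μ Set.univ := htot.symm
      _ = μ (⋃ i ∈ (Finset.univ : Finset (Fin n)), g i • A i) := by
          rw [← hcovA]; simp
      _ ≤ ∑ i, μ (g i • A i) :=
          fa_subadd μ hpos hadd Finset.univ _ (fun i => hsmul _ _ (hAmeas i))
      _ ≤ ∑ i, (μ (A i) + sSup T) :=
          Finset.sum_le_sum (fun i _ => key (g i) (hg i) (A i) (hAmeas i))
      _ = ∑ i, μ (A i) + n * sSup T := by
          rw [Finset.sum_add_distrib, Finset.sum_const, Finset.card_univ,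
            Fintype.card_fin, nsmul_eq_mul]
  have hB1 : (1 : ℝ) ≤ ∑ j, μ (B j) + m * sSup T := by
    calc (1 : ℝ) = μ Set.univ := htot.symm
      _ = μ (⋃ j ∈ (Finset.univ : Finset (Fin m)), k j • B j) := by
          rw [← hcovB]; simp
      _ ≤ ∑ j, μ (k j • B j) :=
          fa_subadd μ hpos hadd Finset.univ _ (fun j => hsmul _ _ (hBmeas j))
      _ ≤ ∑ j, (μ (B j) + sSup T) :=
          Finset.sum_le_sum (fun j _ => key (k j) (hk j) (B j) (hBmeas j))
      _ = ∑ j, μ (B j) + m * sSup T := by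
          rw [Finset.sum_add_distrib, Finset.sum_const, Finset.card_univ,
            Fintype.card_fin, nsmul_eq_mul]
  -- total mass bound
  have hUA : MeasurableSet (⋃ i ∈ (Finset.univ : Finset (Fin n)), A i) :=
    MeasurableSet.biUnion (Finset.univ : Finset (Fin n)).countable_toSet
      (fun i _ => hAmeas i)
  have hUB : MeasurableSet (⋃ j ∈ (Finset.univ : Finset (Fin m)), B j) :=
    MeasurableSet.biUnion (Finset.univ : Finset (Fin m)).countable_toSet
      (fun j _ => hBmeas j)
  have hdisjAB :
      Disjoint (⋃ i ∈ (Finset.univ : Finset (Fin n)), A i)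
        (⋃ j ∈ (Finset.univ : Finset (Fin m)), B j) := by
    rw [Set.disjoint_iUnion₂_left]
    intro i _
    rw [Set.disjoint_iUnion₂_right]
    intro j _
    exact hAB i j
  have hsum : ∑ i, μ (A i) + ∑ j, μ (B j) ≤ 1 := by
    have h1 : μ ((⋃ i ∈ (Finset.univ : Finset (Fin n)), A i) ∪
        (⋃ j ∈ (Finset.univ : Finset (Fin m)), B j)) =
        ∑ i, μ (A i) + ∑ j, μ (B j) := by
      rw [hadd _ _ hUA hUB hdisjAB,
        fa_add μ hadd Finset.univ A hAmeas hAA,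
        fa_add μ hadd Finset.univ B hBmeas hBB]
    have h2 := hle1 _ (hUA.union hUB)
    linarith
  have hnm : (0 : ℝ) < (n : ℝ) + m := by
    have h1 : (1 : ℝ) ≤ n := by exact_mod_cast hn
    have h2 : (1 : ℝ) ≤ m := by exact_mod_cast hm
    linarith
  rw [ge_iff_le, div_le_iff₀ hnm]
  nlinarith [hA1, hB1, hsum]
end

section
/- Let a group G act on a measurable space (X, 𝔐) by measurable bijections and let a, b ∈ G. Suppose there exist four pairwise disjoint nonempty measurable sets A⁺, A⁻, B⁺, B⁻ ∈ 𝔐 such that a·(X ∖ A⁻) ⊆ A⁺ and b·(X ∖ B⁻) ⊆ B⁺. Then for every finitely additive probability measure μ on 𝔐, max { ‖a_*μ − μ‖_TV , ‖b_*μ − μ‖_TV } ≥ 1/2; that is, the action is ({a,b}, 1/2)-non-amenable. -/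
open scoped Pointwise

/-- **Ping-pong pairs give a spectral gap for measures.** If `a, b` form a ping-pong pair
with measurable table on a measurable `G`-space `X`, then for every finitely additive
probability measure `μ`, `max {‖a⁎μ − μ‖_TV, ‖b⁎μ − μ‖_TV} ≥ 1/2`. -/
theorem ping_pong_pair_non_amenable
    {G X : Type*} [Group G] [MulAction G X] [MeasurableSpace X]
    (hmeas : ∀ g : G, Measurable (fun x : X => g • x))
    (a b : G) (Ap Am Bp Bm : Set X)
    (hApm : MeasurableSet Ap) (hAmm : MeasurableSet Am)
    (hBpm : MeasurableSet Bp) (hBmm : MeasurableSet Bm)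
    (hApn : Ap.Nonempty) (hAmn : Am.Nonempty) (hBpn : Bp.Nonempty) (hBmn : Bm.Nonempty)
    (h₁ : Disjoint Ap Am) (h₂ : Disjoint Ap Bp) (h₃ : Disjoint Ap Bm)
    (h₄ : Disjoint Am Bp) (h₅ : Disjoint Am Bm) (h₆ : Disjoint Bp Bm)
    (ha : a • (Set.univ \ Am) ⊆ Ap) (hb : b • (Set.univ \ Bm) ⊆ Bp)
    (μ : Set X → ℝ)
    (hpos : ∀ C : Set X, MeasurableSet C → 0 ≤ μ C)
    (htot : μ Set.univ = 1)
    (hadd : ∀ C D : Set X, MeasurableSet C → MeasurableSet D → Disjoint C D →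
      μ (C ∪ D) = μ C + μ D) :
    max (sSup {x : ℝ | ∃ C : Set X, MeasurableSet C ∧ x = |μ (a⁻¹ • C) - μ C|})
        (sSup {x : ℝ | ∃ C : Set X, MeasurableSet C ∧ x = |μ (b⁻¹ • C) - μ C|}) ≥
      1 / 2 := by
  -- smul of a measurable set is measurable
  have hsm : ∀ (g : G) (C : Set X), MeasurableSet C → MeasurableSet (g • C) := by
    intro g C hC
    have : g • C = (fun x : X => g⁻¹ • x) ⁻¹' C := by
      ext x
      simp [Set.mem_smul_set_iff_inv_smul_mem]
    rw [this]
    exact (hmeas g⁻¹) hC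
  -- monotonicity
  have hmono : ∀ C D : Set X, MeasurableSet C → MeasurableSet D → C ⊆ D → μ C ≤ μ D := by
    intro C D hC hD hCD
    have h1 : μ (C ∪ (D \ C)) = μ C + μ (D \ C) :=
      hadd C (D \ C) hC (hD.diff hC) Set.disjoint_sdiff_right
    have h2 : C ∪ (D \ C) = D := Set.union_diff_cancel hCD
    have := hpos (D \ C) (hD.diff hC)
    rw [h2] at h1
    linarith
  have hle1 : ∀ C : Set X, MeasurableSet C → μ C ≤ 1 := by
    intro C hC
    have := hmono C Set.univ hC MeasurableSet.univ (Set.subset_univ C)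
    linarith
  -- boundedness of the two sets
  have hbdd : ∀ g : G, BddAbove {x : ℝ | ∃ C : Set X, MeasurableSet C ∧ x = |μ (g⁻¹ • C) - μ C|} := by
    intro g
    refine ⟨1, ?_⟩
    rintro x ⟨C, hC, rfl⟩
    have h1 := hpos C hC
    have h2 := hle1 C hC
    have h3 := hpos (g⁻¹ • C) (hsm g⁻¹ C hC)
    have h4 := hle1 (g⁻¹ • C) (hsm g⁻¹ C hC)
    rw [abs_le]
    constructor <;> linarith
  -- key estimate
  have key : ∀ (g : G) (P M : Set X), MeasurableSet P → MeasurableSet M →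
      g • (Set.univ \ M) ⊆ P → μ P + μ M ≤ 1 / 2 →
      (1 : ℝ) / 2 ≤ sSup {x : ℝ | ∃ C : Set X, MeasurableSet C ∧ x = |μ (g⁻¹ • C) - μ C|} := by
    intro g P M hP hM hg hsum
    have hmem : |μ (g⁻¹ • P) - μ P| ∈
        {x : ℝ | ∃ C : Set X, MeasurableSet C ∧ x = |μ (g⁻¹ • C) - μ C|} :=
      ⟨P, hP, rfl⟩
    refine le_trans ?_ (le_csSup (hbdd g) hmem)
    -- univ \ M ⊆ g⁻¹ • P
    have hsub : Set.univ \ M ⊆ g⁻¹ • P := by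
      intro x hx
      rw [Set.mem_smul_set_iff_inv_smul_mem, inv_inv]
      exact hg ⟨x, hx, rfl⟩
    have hum : μ (Set.univ \ M) = 1 - μ M := by
      have h1 : μ (M ∪ (Set.univ \ M)) = μ M + μ (Set.univ \ M) :=
        hadd M _ hM (MeasurableSet.univ.diff hM) Set.disjoint_sdiff_right
      rw [Set.union_diff_cancel (Set.subset_univ M)] at h1
      rw [htot] at h1
      linarith
    have h2 : μ (Set.univ \ M) ≤ μ (g⁻¹ • P) :=
      hmono _ _ (MeasurableSet.univ.diff hM) (hsm g⁻¹ P hP) hsub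
    have hPpos := hpos P hP
    have hMpos := hpos M hM
    rw [le_abs]
    left
    linarith
  -- one of the two sums is ≤ 1/2
  have hsum : μ Ap + μ Am + (μ Bp + μ Bm) ≤ 1 := by
    have hAB : MeasurableSet (Ap ∪ Am) := hApm.union hAmm
    have hBB : MeasurableSet (Bp ∪ Bm) := hBpm.union hBmm
    have e1 : μ (Ap ∪ Am) = μ Ap + μ Am := hadd _ _ hApm hAmm h₁
    have e2 : μ (Bp ∪ Bm) = μ Bp + μ Bm := hadd _ _ hBpm hBmm h₆
    have hd : Disjoint (Ap ∪ Am) (Bp ∪ Bm) := by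
      simp only [Set.disjoint_union_left, Set.disjoint_union_right]
      exact ⟨⟨h₂, h₄⟩, ⟨h₃, h₅⟩⟩
    have e3 : μ ((Ap ∪ Am) ∪ (Bp ∪ Bm)) = μ (Ap ∪ Am) + μ (Bp ∪ Bm) :=
      hadd _ _ hAB hBB hd
    have := hmono _ Set.univ (hAB.union hBB) MeasurableSet.univ (Set.subset_univ _)
    rw [htot] at this
    linarith
  rcases le_or_gt (μ Ap + μ Am) (1 / 2) with h | h
  · exact le_max_of_le_left (key a Ap Am hApm hAmm ha h)
  · refine le_max_of_le_right (key b Bp Bm hBpm hBmm hb ?_)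
    linarith
end
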